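/- arXiv:1102.5536 — 2 statements merged into one kernel-verified Lean document; each statement's English description precedes it below -/
import Mathlib

section
/- Let (S_n) be a real random walk with positive drift E[S_1] > 0 and E[S_1^2] < ∞, and let (a_i, S_i − S_{i−1})_{i≥1} be an i.i.d. sequence with a_i ≥ 0 almost surely. Then for every p ≥ 1 with E[a_1^p] < ∞ and every κ > 0 there is a constant c_{p,κ} > 0 such that E_x[ ( ∑_{k=0}^{τ_t^+ − 1} a_{k+1} · e^{κ(S_k − t)} )^p ] ≤ c_{p,κ} for all t > 0 and all x ≤ t. -/
set_option linter.unusedSectionVars false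
set_option linter.unnecessarySimpa false
set_option linter.unusedVariables false
set_option maxHeartbeats 1000000


open MeasureTheory ProbabilityTheory Filter Topology Real
open scoped ENNReal NNReal

variable {Ω : Type*} [MeasurableSpace Ω]

/-- The random walk started at `x` with increments `X`. -/
noncomputable def walk (X : ℕ → Ω → ℝ) (x : ℝ) (n : ℕ) (ω : Ω) : ℝ :=
  x + ∑ i ∈ Finset.range n, X i ω

/-- `τ_a^+`: the first time the walk (started at `x`) exceeds level `a`, as an
extended natural number (`⊤` if the walk never exceeds `a`). -/
noncomputable def hitAbove (X : ℕ → Ω → ℝ) (x a : ℝ) (ω : Ω) : ℕ∞ :=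
  ⨅ (n : ℕ) (_ : a < walk X x n ω), (n : ℕ∞)

/-- `τ_a^-`: the first time the walk (started at `x`) goes below level `a`. -/
noncomputable def hitBelow (X : ℕ → Ω → ℝ) (x a : ℝ) (ω : Ω) : ℕ∞ :=
  ⨅ (n : ℕ) (_ : walk X x n ω < a), (n : ℕ∞)

/-- `S_{τ_a^+}`: the walk stopped when it first exceeds `a` (junk value if never). -/
noncomputable def stopAbove (X : ℕ → Ω → ℝ) (x a : ℝ) (ω : Ω) : ℝ :=
  walk X x (hitAbove X x a ω).toNat ω

/-- `S_{τ_a^-}`: the walk stopped when it first goes below `a` (junk value if never). -/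
noncomputable def stopBelow (X : ℕ → Ω → ℝ) (x a : ℝ) (ω : Ω) : ℝ :=
  walk X x (hitBelow X x a ω).toNat ω

/-- A real random variable has non-arithmetic distribution: its law is not
supported on any lattice `hℤ`. -/
def NonArithmetic (Y : Ω → ℝ) (μ : Measure Ω) : Prop :=
  ¬ ∃ h : ℝ, ∀ᵐ ω ∂μ, ∃ k : ℤ, Y ω = k * h


section AuxiliaryLemmas

section MinkowskiAux

variable {Ω : Type*} [MeasurableSpace Ω] {μ : Measure Ω}

lemma my_iSup_rpow {ι : Sort*} [Nonempty ι] (g : ι → ℝ≥0∞) {q : ℝ} (hq : 0 < q) :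
    (⨆ i, g i) ^ q = ⨆ i, (g i) ^ q := by
  have hinv : ∀ x : ℝ≥0∞, (x ^ q) ^ (1/q) = x := by
    intro x
    rw [← ENNReal.rpow_mul, mul_one_div_cancel hq.ne', ENNReal.rpow_one]
  refine le_antisymm ?_ (iSup_le fun i => ENNReal.rpow_le_rpow (le_iSup g i) hq.le)
  have h1 : (⨆ i, g i) ≤ (⨆ i, (g i) ^ q) ^ (1/q) := by
    refine iSup_le fun i => ?_
    rw [← hinv (g i)]
    exact ENNReal.rpow_le_rpow (le_iSup (fun i => g i ^ q) i) (by positivity)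
  calc (⨆ i, g i) ^ q ≤ (((⨆ i, (g i) ^ q) ^ (1/q)) : ℝ≥0∞) ^ q :=
        ENNReal.rpow_le_rpow h1 hq.le
    _ = ⨆ i, (g i) ^ q := by
        rw [← ENNReal.rpow_mul, one_div_mul_cancel hq.ne', ENNReal.rpow_one]

lemma my_minkowski_finset {ι : Type*} (f : ι → Ω → ℝ≥0∞) (hf : ∀ i, Measurable (f i))
    {p : ℝ} (hp : 1 ≤ p) (s : Finset ι) :
    (∫⁻ ω, (∑ i ∈ s, f i ω) ^ p ∂μ) ^ (1/p) ≤ ∑ i ∈ s, (∫⁻ ω, f i ω ^ p ∂μ) ^ (1/p) := by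
  have hp0 : (0:ℝ) < p := lt_of_lt_of_le one_pos hp
  classical
  induction s using Finset.induction_on with
  | empty =>
      simp [ENNReal.zero_rpow_of_pos hp0,
        ENNReal.zero_rpow_of_pos (by positivity : (0:ℝ) < 1/p), hp0]
  | @insert a s' hx ih =>
      simp only [Finset.sum_insert hx]
      calc (∫⁻ ω, (f a ω + ∑ i ∈ s', f i ω) ^ p ∂μ) ^ (1/p)
          ≤ (∫⁻ ω, f a ω ^ p ∂μ) ^ (1/p) + (∫⁻ ω, (∑ i ∈ s', f i ω) ^ p ∂μ) ^ (1/p) :=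
            ENNReal.lintegral_Lp_add_le (hf a).aemeasurable
              (Finset.measurable_sum s' (fun i _ => hf i)).aemeasurable hp
        _ ≤ (∫⁻ ω, f a ω ^ p ∂μ) ^ (1/p) + ∑ i ∈ s', (∫⁻ ω, f i ω ^ p ∂μ) ^ (1/p) :=
            add_le_add le_rfl ih

lemma my_minkowski_tsum {ι : Type*} [Countable ι] (f : ι → Ω → ℝ≥0∞)
    (hf : ∀ i, Measurable (f i)) {p : ℝ} (hp : 1 ≤ p) :
    (∫⁻ ω, (∑' i, f i ω) ^ p ∂μ) ^ (1/p) ≤ ∑' i, (∫⁻ ω, f i ω ^ p ∂μ) ^ (1/p) := by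
  classical
  have hp0 : (0:ℝ) < p := lt_of_lt_of_le one_pos hp
  have h1 : ∀ ω, (∑' i, f i ω) ^ p = ⨆ s : Finset ι, (∑ i ∈ s, f i ω) ^ p := by
    intro ω
    rw [ENNReal.tsum_eq_iSup_sum, my_iSup_rpow _ hp0]
  have hdir : Directed (· ≤ ·) (fun s : Finset ι => fun ω => (∑ i ∈ s, f i ω) ^ p) := by
    intro s t
    refine ⟨s ∪ t, fun ω => ?_, fun ω => ?_⟩ <;>
      exact ENNReal.rpow_le_rpow (Finset.sum_le_sum_of_subset (by simp)) hp0.le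
  have h2 : ∫⁻ ω, (∑' i, f i ω) ^ p ∂μ
      = ⨆ s : Finset ι, ∫⁻ ω, (∑ i ∈ s, f i ω) ^ p ∂μ := by
    simp_rw [h1]
    exact lintegral_iSup_directed
      (fun s => ((Finset.measurable_sum s (fun i _ => hf i)).pow_const _).aemeasurable) hdir
  rw [h2, my_iSup_rpow _ (by positivity : (0:ℝ) < 1/p)]
  refine iSup_le fun s => ?_
  exact le_trans (my_minkowski_finset f hf hp s) (ENNReal.sum_le_tsum s)

lemma my_tsum_rpow_of_disjoint (v : ℕ → ℝ≥0∞) {p : ℝ} (hp : 0 < p)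
    (h : ∀ k k', k ≠ k' → v k = 0 ∨ v k' = 0) :
    (∑' k, v k) ^ p = ∑' k, (v k) ^ p := by
  by_cases hz : ∀ k, v k = 0
  · simp [hz, ENNReal.zero_rpow_of_pos hp]
  · push_neg at hz
    obtain ⟨k0, hk0⟩ := hz
    have hall : ∀ k ≠ k0, v k = 0 := fun k hk => (h k k0 hk).resolve_right hk0
    rw [tsum_eq_single k0 hall, tsum_eq_single k0 (fun k hk => by
      rw [hall k hk, ENNReal.zero_rpow_of_pos hp])]

end MinkowskiAux

section WalkAux

/-- The event: time `k` is a visit of the walk to `(a, a+1]` and exactly `r` earlier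
times were visits. -/
def hitE (X : ℕ → Ω → ℝ) (x a : ℝ) (r k : ℕ) : Set Ω :=
  {ω | walk X x k ω ∈ Set.Ioc a (a+1) ∧
       ((Finset.range k).filter (fun l => walk X x l ω ∈ Set.Ioc a (a+1))).card = r}

lemma measurable_walk (X : ℕ → Ω → ℝ) (hX : ∀ i, Measurable (X i)) (x : ℝ) (n : ℕ) :
    Measurable (walk X x n) :=
  measurable_const.add (Finset.measurable_sum _ fun i _ => hX i)

lemma walk_add (X : ℕ → Ω → ℝ) (x : ℝ) (k n : ℕ) (ω : Ω) :
    walk X x (k + n) ω = walk X x k ω + ∑ i ∈ Finset.range n, X (k + i) ω := by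
  simp [walk, Finset.sum_range_add, add_assoc]

lemma measurableSet_hitE (X : ℕ → Ω → ℝ) (hX : ∀ i, Measurable (X i)) (x a : ℝ) (r k : ℕ) :
    MeasurableSet (hitE X x a r k) := by
  classical
  have hm : ∀ l, MeasurableSet {ω | walk X x l ω ∈ Set.Ioc a (a+1)} :=
    fun l => (measurable_walk X hX x l) measurableSet_Ioc
  have hcnt : Measurable (fun ω =>
      ((Finset.range k).filter (fun l => walk X x l ω ∈ Set.Ioc a (a+1))).card) := by
    have : (fun ω => ((Finset.range k).filter
        (fun l => walk X x l ω ∈ Set.Ioc a (a+1))).card)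
        = fun ω => ∑ l ∈ Finset.range k, if walk X x l ω ∈ Set.Ioc a (a+1) then 1 else 0 := by
      funext ω; rw [Finset.card_filter]
    rw [this]
    exact Finset.measurable_sum _ fun l _ => Measurable.ite (hm l)
      measurable_const measurable_const
  exact (hm k).inter (hcnt (measurableSet_singleton r))

lemma hitE_disjoint (X : ℕ → Ω → ℝ) (x a : ℝ) (r : ℕ) {k k' : ℕ} (hkk : k < k') :
    hitE X x a r k ∩ hitE X x a r k' = ∅ := by
  classical
  ext ω
  simp only [Set.mem_inter_iff, Set.mem_empty_iff_false, iff_false]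
  rintro ⟨⟨h1, h2⟩, ⟨_, h4⟩⟩
  have hss : (Finset.range k).filter (fun l => walk X x l ω ∈ Set.Ioc a (a+1)) ⊂
      (Finset.range k').filter (fun l => walk X x l ω ∈ Set.Ioc a (a+1)) := by
    refine Finset.ssubset_iff_of_subset
      (Finset.filter_subset_filter _ (by simpa using Finset.range_subset_range.2 hkk.le)) |>.2 ?_
    exact ⟨k, Finset.mem_filter.mpr ⟨Finset.mem_range.mpr hkk, h1⟩,
      fun hc => absurd (Finset.mem_range.mp (Finset.mem_filter.mp hc).1) (lt_irrefl k)⟩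
  have := Finset.card_lt_card hss
  omega

/-- Existence of the `(i+1)`-th smallest element of a finset of naturals. -/
lemma exists_nth_elt (G : Finset ℕ) (i : ℕ) (h : i < G.card) :
    ∃ k ∈ G, (G.filter (· < k)).card = i ∧ (G.filter (k < ·)).card = G.card - i - 1 := by
  classical
  set e := G.orderIsoOfFin rfl with he
  set k : ℕ := (e ⟨i, h⟩ : ℕ) with hk
  have hinj : Function.Injective (fun j : Fin G.card => ((e j : ℕ))) :=
    fun j j' hj => e.injective (Subtype.ext hj)
  have hmem : ∀ y, y ∈ G ↔ ∃ j, (e j : ℕ) = y := by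
    intro y
    constructor
    · intro hy; exact ⟨e.symm ⟨y, hy⟩, by simp⟩
    · rintro ⟨j, rfl⟩; exact (e j).2
  have hlt : ∀ j j' : Fin G.card, (e j : ℕ) < (e j' : ℕ) ↔ j < j' := by
    intro j j'
    constructor
    · intro hh; exact e.lt_iff_lt.mp (by exact_mod_cast hh)
    · intro hh; exact_mod_cast e.lt_iff_lt.mpr hh
  have hfilt : ∀ (P : ℕ → Prop) [DecidablePred P],
      G.filter P = (Finset.univ.filter (fun j : Fin G.card => P (e j))).image
        (fun j => (e j : ℕ)) := by
    intro P _
    ext y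
    simp only [Finset.mem_filter, Finset.mem_image, Finset.mem_univ, true_and]
    constructor
    · rintro ⟨hy, hPy⟩
      obtain ⟨j, rfl⟩ := (hmem y).1 hy
      exact ⟨j, hPy, rfl⟩
    · rintro ⟨j, hPj, rfl⟩
      exact ⟨(hmem _).2 ⟨j, rfl⟩, hPj⟩
  refine ⟨k, (hmem k).2 ⟨_, rfl⟩, ?_, ?_⟩
  · rw [hfilt]
    rw [Finset.card_image_of_injective _ hinj]
    have : (Finset.univ.filter (fun j : Fin G.card => (e j : ℕ) < k))
        = Finset.univ.filter (fun j : Fin G.card => j < ⟨i, h⟩) := by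
      apply Finset.filter_congr; intro j _; exact hlt j ⟨i, h⟩
    rw [this, Finset.filter_gt_eq_Iio, Fin.card_Iio]
  · rw [hfilt]
    rw [Finset.card_image_of_injective _ hinj]
    have : (Finset.univ.filter (fun j : Fin G.card => k < (e j : ℕ)))
        = Finset.univ.filter (fun j : Fin G.card => (⟨i, h⟩ : Fin G.card) < j) := by
      apply Finset.filter_congr; intro j _; exact hlt ⟨i, h⟩ j
    rw [this]
    have : (Finset.univ.filter (fun j : Fin G.card => (⟨i, h⟩ : Fin G.card) < j))
        = Finset.Ioi (⟨i, h⟩ : Fin G.card) := by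
      ext j; simp [Finset.mem_Ioi]
    rw [this, Fin.card_Ioi]
    show G.card - 1 - i = G.card - i - 1
    omega

/-- Descend from the `(i+m)`-th visit to the `i`-th visit: it happened at least `m` steps
earlier, and the walk moved by at most 1 in between. -/
lemma hitE_descend (X : ℕ → Ω → ℝ) (x a : ℝ) (i m k' : ℕ) (hm : 1 ≤ m) (ω : Ω)
    (hω : ω ∈ hitE X x a (i + m) k') :
    ∃ k, ω ∈ hitE X x a i k ∧ k + m ≤ k' ∧
      ∑ i' ∈ Finset.range (k' - k), X (k + i') ω ≤ 1 := by
  classical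
  obtain ⟨h1, h2⟩ := hω
  set G := (Finset.range k').filter (fun l => walk X x l ω ∈ Set.Ioc a (a+1)) with hG
  have hcard : G.card = i + m := h2
  obtain ⟨k, hkG, hbelow, habove⟩ := exists_nth_elt G i (by omega)
  have hkmem : k < k' ∧ walk X x k ω ∈ Set.Ioc a (a+1) := by
    simpa [hG, Finset.mem_filter, Finset.mem_range] using hkG
  have hcnt : ((Finset.range k).filter (fun l => walk X x l ω ∈ Set.Ioc a (a+1))).card = i := by
    have : (Finset.range k).filter (fun l => walk X x l ω ∈ Set.Ioc a (a+1))
        = G.filter (· < k) := by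
      ext l
      simp only [hG, Finset.mem_filter, Finset.mem_range]
      constructor
      · rintro ⟨hlk, hvis⟩; exact ⟨⟨lt_trans hlk hkmem.1, hvis⟩, hlk⟩
      · rintro ⟨⟨_, hvis⟩, hlk⟩; exact ⟨hlk, hvis⟩
    rw [this, hbelow]
  have hsub : G.filter (k < ·) ⊆ Finset.Ioo k k' := by
    intro l hl
    simp only [hG, Finset.mem_filter, Finset.mem_range] at hl
    simp only [Finset.mem_Ioo]
    exact ⟨hl.2, hl.1.1⟩
  have hcard2 : m - 1 ≤ k' - k - 1 := by
    have := Finset.card_le_card hsub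
    rw [habove, Nat.card_Ioo] at this
    omega
  have hkm : k + m ≤ k' := by omega
  refine ⟨k, ⟨hkmem.2, hcnt⟩, hkm, ?_⟩
  have hwadd : walk X x k' ω = walk X x k ω + ∑ i' ∈ Finset.range (k' - k), X (k + i') ω := by
    have := walk_add X x k (k' - k) ω
    rwa [Nat.add_sub_cancel' (by omega : k ≤ k')] at this
  have : walk X x k' ω ≤ a + 1 := h1.2
  have : a < walk X x k ω := hkmem.2.1
  linarith [hwadd ▸ h1.2, hkmem.2.1]

end WalkAux

/-- The law of a finite window of an i.i.d. sequence does not depend on the starting index. -/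
lemma my_map_vec_eq (μ : Measure Ω) [IsProbabilityMeasure μ] (Y : ℕ → Ω → ℝ)
    (hY : ∀ i, Measurable (Y i))
    (hind : iIndepFun Y μ)
    (hid : ∀ i, IdentDistrib (Y i) (Y 0) μ μ) (k M : ℕ) :
    Measure.map (fun ω (i : Fin M) => Y (k + i) ω) μ
      = Measure.map (fun ω (i : Fin M) => Y (0 + i) ω) μ := by
  classical
  set ν : Measure ℝ := Measure.map (Y 0) μ with hν
  haveI : IsProbabilityMeasure ν := Measure.isProbabilityMeasure_map (hY 0).aemeasurable
  have key : ∀ k : ℕ, Measure.map (fun ω (i : Fin M) => Y (k + i) ω) μ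
      = Measure.pi (fun _ : Fin M => ν) := by
    intro k
    have hmeas : Measurable (fun ω (i : Fin M) => Y (k + i) ω) :=
      measurable_pi_lambda _ fun i => hY (k + i)
    refine (Measure.pi_eq (fun s hs => ?_)).symm
    rw [Measure.map_apply hmeas (MeasurableSet.univ_pi hs)]
    set sets : ℕ → Set ℝ := fun n => if h : k ≤ n ∧ n - k < M then s ⟨n - k, h.2⟩ else Set.univ
      with hsets
    set S : Finset ℕ := (Finset.range M).image (fun i => k + i) with hS
    have hpre : (fun ω (i : Fin M) => Y (k + i) ω) ⁻¹' (Set.univ.pi s)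
        = ⋂ i ∈ S, Y i ⁻¹' sets i := by
      ext ω
      simp only [Set.mem_preimage, Set.mem_univ_pi, Set.mem_iInter, hS, Finset.mem_image,
        Finset.mem_range]
      constructor
      · rintro hall n ⟨i, hiM, rfl⟩
        have h1 : k ≤ k + i ∧ k + i - k < M := by omega
        simp only [hsets, Set.mem_preimage, dif_pos h1]
        have : (⟨k + i - k, h1.2⟩ : Fin M) = ⟨i, hiM⟩ := Fin.mk_eq_mk.mpr (by omega)
        rw [this]
        exact hall ⟨i, hiM⟩
      · intro hall i
        have := hall (k + i.1) ⟨i.1, i.2, rfl⟩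
        have h1 : k ≤ k + i.1 ∧ k + i.1 - k < M := by omega
        simp only [hsets, Set.mem_preimage, dif_pos h1] at this
        have heq : (⟨k + i.1 - k, h1.2⟩ : Fin M) = i := by
          apply Fin.ext; show k + i.1 - k = i.1; omega
        rwa [heq] at this
    rw [hpre]
    rw [hind.measure_inter_preimage_eq_mul S (fun n hn => by
      by_cases h : k ≤ n ∧ n - k < M
      · simp only [hsets, dif_pos h]; exact hs _
      · simp only [hsets, dif_neg h]; exact MeasurableSet.univ)]
    rw [hS, Finset.prod_image (fun a _ b _ h => by simpa using h)]
    have hterm : ∀ i ∈ Finset.range M,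
        μ (Y (k + i) ⁻¹' sets (k + i)) = ν (sets (k + i)) := by
      intro i hi
      have hmeassets : MeasurableSet (sets (k + i)) := by
        by_cases h : k ≤ k + i ∧ k + i - k < M
        · simp only [hsets, dif_pos h]; exact hs _
        · simp only [hsets, dif_neg h]; exact MeasurableSet.univ
      rw [← Measure.map_apply (hY (k + i)) hmeassets, (hid (k + i)).map_eq]
    rw [Finset.prod_congr rfl hterm]
    -- now turn into product over Fin M
    have : ∀ i ∈ Finset.range M, ν (sets (k + i)) =
        (fun n => if h : n < M then ν (s ⟨n, h⟩) else 1) i := by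
      intro i hi
      have hiM : i < M := Finset.mem_range.mp hi
      have h1 : k ≤ k + i ∧ k + i - k < M := by omega
      simp only [hsets, dif_pos h1, dif_pos hiM]
      have heq : (⟨k + i - k, h1.2⟩ : Fin M) = ⟨i, hiM⟩ := Fin.mk_eq_mk.mpr (by omega)
      rw [heq]
    rw [Finset.prod_congr rfl this, ← Fin.prod_univ_eq_prod_range]
    refine Finset.prod_congr rfl fun i _ => ?_
    simp [i.2]
  rw [key k, key 0]

/-- Independence of an event depending on the first `k` steps from an event depending on
the window `[k, k+M)`. -/
lemma my_indep_window (μ : Measure Ω) (Y : ℕ → Ω → ℝ) (hY : ∀ i, Measurable (Y i))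
    (hind : iIndepFun Y μ) (k M : ℕ)
    {s1 : Set (Fin k → ℝ)} (hs1 : MeasurableSet s1)
    {s2 : Set (Fin M → ℝ)} (hs2 : MeasurableSet s2) :
    μ ((fun ω (i : Fin k) => Y i ω) ⁻¹' s1 ∩ (fun ω (i : Fin M) => Y (k + i) ω) ⁻¹' s2)
      = μ ((fun ω (i : Fin k) => Y i ω) ⁻¹' s1)
        * μ ((fun ω (i : Fin M) => Y (k + i) ω) ⁻¹' s2) := by
  classical
  set S : Finset ℕ := Finset.range k with hS
  set T : Finset ℕ := (Finset.range M).image (fun i => k + i) with hT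
  have hST : Disjoint S T := by
    rw [Finset.disjoint_left]
    intro n hn hn'
    simp only [hS, Finset.mem_range] at hn
    simp only [hT, Finset.mem_image, Finset.mem_range] at hn'
    omega
  have hbase := hind.indepFun_finset S T hST hY
  have hπ1 : Measurable (fun (v : (i : S) → ℝ) (i : Fin k) =>
      v ⟨i.1, by simp [hS, Finset.mem_range, i.2]⟩) :=
    measurable_pi_lambda _ fun i => measurable_pi_apply _
  have hπ2 : Measurable (fun (v : (i : T) → ℝ) (i : Fin M) =>
      v ⟨k + i.1, by simp [hT, Finset.mem_image, Finset.mem_range]⟩) :=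
    measurable_pi_lambda _ fun i => measurable_pi_apply _
  have h := hbase.comp hπ1 hπ2
  exact h.measure_inter_preimage_eq_mul s1 s2 hs1 hs2

/-- From the strong law of large numbers with positive drift: there is a horizon `m ≥ 1`
such that with probability at least `1/2` the partial sums stay above `1` from time `m` on. -/
lemma my_exists_horizon (μ : Measure Ω) [IsProbabilityMeasure μ] (Y : ℕ → Ω → ℝ)
    (hY : ∀ i, Measurable (Y i))
    (hindep : Pairwise fun i j => IndepFun (Y i) (Y j) μ)
    (hid : ∀ i, IdentDistrib (Y i) (Y 0) μ μ)
    (hint : Integrable (Y 0) μ) (hdrift : 0 < ∫ ω, Y 0 ω ∂μ) :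
    ∃ m : ℕ, 1 ≤ m ∧
      μ {ω | ∃ n, m ≤ n ∧ ∑ i ∈ Finset.range n, Y i ω ≤ 1} ≤ 2⁻¹ := by
  classical
  set c := ∫ ω, Y 0 ω ∂μ with hc
  set D : ℕ → Set Ω := fun m => {ω | ∀ n, m ≤ n → 1 < ∑ i ∈ Finset.range n, Y i ω} with hD
  have hDmeas : ∀ m, MeasurableSet (D m) := by
    intro m
    have : D m = ⋂ n, ⋂ (_ : m ≤ n), {ω | 1 < ∑ i ∈ Finset.range n, Y i ω} := by
      ext ω; simp [hD, Set.mem_iInter]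
    rw [this]
    exact MeasurableSet.iInter fun n => MeasurableSet.iInter fun _ =>
      measurableSet_lt measurable_const (Finset.measurable_sum _ fun i _ => hY i)
  have hmono : Monotone D := by
    intro m m' hmm ω hω n hn
    exact hω n (le_trans hmm hn)
  have hae : ∀ᵐ ω ∂μ, ω ∈ ⋃ m, D m := by
    have hslln := strong_law_ae_real Y hint (fun i j hij => hindep hij) hid
    filter_upwards [hslln] with ω hω
    have h1 : ∀ᶠ n : ℕ in atTop, c / 2 < (∑ i ∈ Finset.range n, Y i ω) / n :=
      hω.eventually_const_lt (half_lt_self hdrift)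
    have h2 : ∀ᶠ n : ℕ in atTop, 2 / c < (n : ℝ) :=
      tendsto_natCast_atTop_atTop.eventually (eventually_gt_atTop (2 / c))
    have h3 : ∀ᶠ n : ℕ in atTop, 1 < ∑ i ∈ Finset.range n, Y i ω := by
      filter_upwards [h1, h2] with n hn1 hn2
      have hnpos : (0 : ℝ) < n := lt_trans (div_pos two_pos hdrift) hn2
      have e1 : (∑ i ∈ Finset.range n, Y i ω) = ((∑ i ∈ Finset.range n, Y i ω) / n) * n :=
        (div_mul_cancel₀ _ hnpos.ne').symm
      have e2 : c / 2 * n < ((∑ i ∈ Finset.range n, Y i ω) / n) * n :=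
        mul_lt_mul_of_pos_right hn1 hnpos
      have e3 : (1 : ℝ) < c / 2 * n := by
        have : c / 2 * (2 / c) < c / 2 * n := mul_lt_mul_of_pos_left hn2 (half_pos hdrift)
        have heq : c / 2 * (2 / c) = 1 := by field_simp
        linarith
      linarith [e1 ▸ e2]
    obtain ⟨m, hm⟩ := eventually_atTop.mp h3
    exact Set.mem_iUnion.mpr ⟨m, fun n hn => hm n hn⟩
  have hunion : μ (⋃ m, D m) = 1 := by
    refine le_antisymm prob_le_one ?_
    have hcompl : μ ((⋃ m, D m)ᶜ) = 0 := by
      have : ((⋃ m, D m)ᶜ) = {ω | ¬ ω ∈ ⋃ m, D m} := rfl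
      rw [this, ← ae_iff]
      exact hae
    have := prob_compl_eq_one_sub (μ := μ) (MeasurableSet.iUnion hDmeas)
    rw [hcompl] at this
    exact tsub_eq_zero_iff_le.mp this.symm
  have htend : Tendsto (fun m => μ (D m)) atTop (𝓝 (μ (⋃ m, D m))) :=
    tendsto_measure_iUnion_atTop hmono
  rw [hunion] at htend
  have hev : ∀ᶠ m in atTop, 2⁻¹ < μ (D m) :=
    htend.eventually_const_lt (by norm_num)
  obtain ⟨m0, hm0⟩ := hev.exists
  refine ⟨max m0 1, le_max_right _ _, ?_⟩
  have hset : {ω | ∃ n, max m0 1 ≤ n ∧ ∑ i ∈ Finset.range n, Y i ω ≤ 1} = (D (max m0 1))ᶜ := by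
    ext ω
    simp only [hD, Set.mem_compl_iff, Set.mem_setOf_eq, not_forall, not_lt]
    constructor
    · rintro ⟨n, hn1, hn2⟩; exact ⟨n, hn1, hn2⟩
    · rintro ⟨n, hn1, hn2⟩; exact ⟨n, hn1, hn2⟩
  rw [hset, prob_compl_eq_one_sub (hDmeas _)]
  have : 2⁻¹ ≤ μ (D (max m0 1)) := le_trans hm0.le (measure_mono (hmono (le_max_left _ _)))
  calc (1 : ℝ≥0∞) - μ (D (max m0 1)) ≤ 1 - 2⁻¹ := tsub_le_tsub_left this 1
    _ = 2⁻¹ := by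
        rw [ENNReal.sub_eq_of_eq_add (by norm_num)]
        rw [ENNReal.inv_two_add_inv_two]

section ChunkE

variable {Ω : Type*} [MeasurableSpace Ω]

lemma my_hitE_preimage (X : ℕ → Ω → ℝ) (x a : ℝ) (r k : ℕ) :
    ∃ s : Set (Fin k → ℝ), MeasurableSet s ∧
      hitE X x a r k = (fun ω (l : Fin k) => X l ω) ⁻¹' s := by
  classical
  set wk : (Fin k → ℝ) → ℕ → ℝ :=
    fun v l => x + ∑ i ∈ Finset.range l, (if h : i < k then v ⟨i, h⟩ else 0) with hwk
  have hwkmeas : ∀ l, Measurable fun v => wk v l := by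
    intro l
    apply Measurable.add measurable_const
    apply Finset.measurable_sum
    intro i _
    by_cases h : i < k
    · simpa [h] using (measurable_pi_apply (⟨i, h⟩ : Fin k))
    · simpa [h] using (measurable_const : Measurable fun _ : Fin k → ℝ => (0:ℝ))
  refine ⟨{v | wk v k ∈ Set.Ioc a (a+1) ∧
      ((Finset.range k).filter (fun l => wk v l ∈ Set.Ioc a (a+1))).card = r}, ?_, ?_⟩
  · have h1 : MeasurableSet {v : Fin k → ℝ | wk v k ∈ Set.Ioc a (a+1)} :=
      (hwkmeas k) measurableSet_Ioc
    have h2 : Measurable fun v : Fin k → ℝ =>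
        ((Finset.range k).filter (fun l => wk v l ∈ Set.Ioc a (a+1))).card := by
      have : (fun v : Fin k → ℝ =>
          ((Finset.range k).filter (fun l => wk v l ∈ Set.Ioc a (a+1))).card)
          = fun v => ∑ l ∈ Finset.range k, if wk v l ∈ Set.Ioc a (a+1) then 1 else 0 := by
        funext v; rw [Finset.card_filter]
      rw [this]
      exact Finset.measurable_sum _ fun l _ =>
        Measurable.ite ((hwkmeas l) measurableSet_Ioc) measurable_const measurable_const
    exact h1.inter (h2 (measurableSet_singleton r))
  · ext ω
    have hagree : ∀ l, l ≤ k → wk (fun i : Fin k => X i ω) l = walk X x l ω := by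
      intro l hl
      simp only [hwk, walk]
      congr 1
      refine Finset.sum_congr rfl fun i hi => ?_
      rw [dif_pos (lt_of_lt_of_le (Finset.mem_range.mp hi) hl)]
    simp only [hitE, Set.mem_setOf_eq, Set.mem_preimage]
    rw [hagree k le_rfl]
    constructor
    · rintro ⟨h1, h2⟩
      refine ⟨h1, ?_⟩
      rw [← h2]
      congr 1
      refine Finset.filter_congr fun l hl => ?_
      rw [hagree l (le_of_lt (Finset.mem_range.mp hl))]
    · rintro ⟨h1, h2⟩
      refine ⟨h1, ?_⟩
      rw [← h2]
      congr 1
      refine Finset.filter_congr fun l hl => ?_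
      rw [hagree l (le_of_lt (Finset.mem_range.mp hl))]

/-- The cylinder set describing the window event; it does not depend on the window start. -/
def windowSet (m M : ℕ) : Set (Fin M → ℝ) :=
  {v | ∃ n, m ≤ n ∧ n ≤ M ∧ ∑ i ∈ Finset.range n, (if h : i < M then v ⟨i, h⟩ else 0) ≤ 1}

lemma my_window_measurable (m M : ℕ) : MeasurableSet (windowSet m M) := by
  classical
  have : windowSet m M
      = ⋃ n, ⋃ (_ : m ≤ n ∧ n ≤ M),
        {v : Fin M → ℝ | ∑ i ∈ Finset.range n, (if h : i < M then v ⟨i, h⟩ else 0) ≤ 1} := by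
    ext v; simp only [windowSet, Set.mem_setOf_eq, Set.mem_iUnion]; tauto
  rw [this]
  refine MeasurableSet.iUnion fun n => MeasurableSet.iUnion fun _ => ?_
  have hsum : Measurable fun v : Fin M → ℝ =>
      ∑ i ∈ Finset.range n, (if h : i < M then v ⟨i, h⟩ else 0) := by
    apply Finset.measurable_sum
    intro i _
    by_cases h : i < M
    · simpa [h] using (measurable_pi_apply (⟨i, h⟩ : Fin M))
    · simpa [h] using (measurable_const : Measurable fun _ : Fin M → ℝ => (0:ℝ))
  exact measurableSet_le hsum measurable_const

lemma my_window_preimage (X : ℕ → Ω → ℝ) (m k M : ℕ) :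
      {ω : Ω | ∃ n, m ≤ n ∧ n ≤ M ∧ ∑ i ∈ Finset.range n, X (k + i) ω ≤ 1}
        = (fun ω (i : Fin M) => X (k + i) ω) ⁻¹' windowSet m M := by
  classical
  ext ω
  simp only [windowSet, Set.mem_setOf_eq, Set.mem_preimage]
  refine exists_congr fun n => and_congr_right fun _ => and_congr_right fun hnM => ?_
  have : ∑ i ∈ Finset.range n, (if h : i < M then X (k + (⟨i, h⟩ : Fin M).1) ω else 0)
      = ∑ i ∈ Finset.range n, X (k + i) ω := by
    refine Finset.sum_congr rfl fun i hi => ?_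
    rw [dif_pos (lt_of_lt_of_le (Finset.mem_range.mp hi) hnM)]
  rw [this]

lemma my_key_step (μ : Measure Ω) [IsProbabilityMeasure μ] (X : ℕ → Ω → ℝ)
    (hX : ∀ i, Measurable (X i))
    (hindX : iIndepFun X μ)
    (hidX : ∀ i, IdentDistrib (X i) (X 0) μ μ)
    (m : ℕ) (hm : 1 ≤ m)
    (hB : μ {ω | ∃ n, m ≤ n ∧ ∑ i ∈ Finset.range n, X i ω ≤ 1} ≤ 2⁻¹)
    (x a : ℝ) (i : ℕ) :
    μ (⋃ k, hitE X x a (i + m) k) ≤ 2⁻¹ * μ (⋃ k, hitE X x a i k) := by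
  classical
  set Bk : ℕ → Set Ω := fun k => {ω | ∃ n, m ≤ n ∧ ∑ i' ∈ Finset.range n, X (k + i') ω ≤ 1}
    with hBk
  set BkM : ℕ → ℕ → Set Ω := fun k M =>
    {ω | ∃ n, m ≤ n ∧ n ≤ M ∧ ∑ i' ∈ Finset.range n, X (k + i') ω ≤ 1} with hBkM
  have hBkUnion : ∀ k, Bk k = ⋃ M, BkM k M := by
    intro k
    ext ω
    simp only [hBk, hBkM, Set.mem_setOf_eq, Set.mem_iUnion]
    constructor
    · rintro ⟨n, hn1, hn2⟩; exact ⟨n, n, hn1, le_rfl, hn2⟩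
    · rintro ⟨M, n, hn1, _, hn2⟩; exact ⟨n, hn1, hn2⟩
  have hBkMmono : ∀ k, Monotone (BkM k) := by
    intro k M M' hMM ω hω
    obtain ⟨n, h1, h2, h3⟩ := hω
    exact ⟨n, h1, le_trans h2 hMM, h3⟩
  -- step 1 : inclusion
  have hincl : (⋃ k', hitE X x a (i + m) k') ⊆ ⋃ k, hitE X x a i k ∩ Bk k := by
    intro ω hω
    obtain ⟨k', hk'⟩ := Set.mem_iUnion.mp hω
    obtain ⟨k, hk1, hk2, hk3⟩ := hitE_descend X x a i m k' hm ω hk'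
    refine Set.mem_iUnion.mpr ⟨k, hk1, ⟨k' - k, by omega, hk3⟩⟩
  -- step 3 : independence
  have hfact : ∀ k, μ (hitE X x a i k ∩ Bk k) = μ (hitE X x a i k) * μ (Bk k) := by
    intro k
    obtain ⟨s1, hs1, he1⟩ := my_hitE_preimage X x a i k
    have hdir : Directed (· ⊆ ·) (fun M => hitE X x a i k ∩ BkM k M) :=
      (Monotone.directed_le fun M M' h => Set.inter_subset_inter_right _ (hBkMmono k h))
    have hdir2 : Directed (· ⊆ ·) (BkM k) := (hBkMmono k).directed_le
    have h1 : hitE X x a i k ∩ Bk k = ⋃ M, (hitE X x a i k ∩ BkM k M) := by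
      rw [hBkUnion k, Set.inter_iUnion]
    rw [h1, Directed.measure_iUnion hdir, hBkUnion k, Directed.measure_iUnion hdir2]
    rw [ENNReal.mul_iSup]
    refine iSup_congr fun M => ?_
    have he2 : BkM k M = (fun ω (i : Fin M) => X (k + i) ω) ⁻¹' windowSet m M :=
      my_window_preimage X m k M
    rw [he1, he2]
    exact my_indep_window μ X hX hindX k M hs1 (my_window_measurable m M)
  -- step 4 : μ (Bk k) ≤ 2⁻¹
  have hBkbound : ∀ k, μ (Bk k) ≤ 2⁻¹ := by
    intro k
    have hBmono : Directed (· ⊆ ·) (BkM k) := (hBkMmono k).directed_le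
    rw [hBkUnion k, Directed.measure_iUnion hBmono]
    refine iSup_le fun M => ?_
    have he2 : BkM k M = (fun ω (i : Fin M) => X (k + i) ω) ⁻¹' windowSet m M :=
      my_window_preimage X m k M
    have he2' : BkM 0 M = (fun ω (i : Fin M) => X (0 + i) ω) ⁻¹' windowSet m M :=
      my_window_preimage X m 0 M
    have hlaw := my_map_vec_eq μ X hX hindX hidX k M
    have hμ1 : μ (BkM k M) = Measure.map (fun ω (i : Fin M) => X (k + i) ω) μ (windowSet m M) := by
      rw [Measure.map_apply (measurable_pi_lambda _ fun i => hX _) (my_window_measurable m M)]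
      exact congrArg μ he2
    have hμ2 : Measure.map (fun ω (i : Fin M) => X (0 + i) ω) μ (windowSet m M)
        = μ (BkM 0 M) := by
      rw [Measure.map_apply (measurable_pi_lambda _ fun i => hX _) (my_window_measurable m M)]
      exact (congrArg μ he2').symm
    have : μ (BkM k M) = μ (BkM 0 M) := by
      rw [hμ1, hlaw, hμ2]
    rw [this]
    refine le_trans (measure_mono ?_) hB
    intro ω hω
    obtain ⟨n, h1, _, h3⟩ := hω
    exact ⟨n, h1, by simpa using h3⟩
  -- step 2+5 : combine
  have hdisj : Pairwise (Function.onFun Disjoint fun k => hitE X x a i k) := by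
    intro k k' hkk
    rcases lt_or_gt_of_ne hkk with h | h
    · exact Set.disjoint_iff_inter_eq_empty.mpr (hitE_disjoint X x a i h)
    · exact (Set.disjoint_iff_inter_eq_empty.mpr (hitE_disjoint X x a i h)).symm
  calc μ (⋃ k', hitE X x a (i + m) k')
      ≤ μ (⋃ k, hitE X x a i k ∩ Bk k) := measure_mono hincl
    _ ≤ ∑' k, μ (hitE X x a i k ∩ Bk k) := measure_iUnion_le _
    _ = ∑' k, μ (hitE X x a i k) * μ (Bk k) := by
        exact tsum_congr fun k => hfact k
    _ ≤ ∑' k, μ (hitE X x a i k) * 2⁻¹ := by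
        exact ENNReal.tsum_le_tsum fun k => mul_le_mul_right (hBkbound k) _
    _ = 2⁻¹ * ∑' k, μ (hitE X x a i k) := by
        rw [ENNReal.tsum_mul_right, mul_comm]
    _ = 2⁻¹ * μ (⋃ k, hitE X x a i k) := by
        rw [measure_iUnion hdisj fun k => measurableSet_hitE X hX x a i k]

lemma my_geom_bound (μ : Measure Ω) [IsProbabilityMeasure μ] (X : ℕ → Ω → ℝ)
    (hX : ∀ i, Measurable (X i))
    (hindX : iIndepFun X μ)
    (hidX : ∀ i, IdentDistrib (X i) (X 0) μ μ)
    (m : ℕ) (hm : 1 ≤ m)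
    (hB : μ {ω | ∃ n, m ≤ n ∧ ∑ i ∈ Finset.range n, X i ω ≤ 1} ≤ 2⁻¹)
    (x a : ℝ) (r : ℕ) :
    μ (⋃ k, hitE X x a r k) ≤ 2⁻¹ ^ (r / m) := by
  have haux : ∀ n s, μ (⋃ k, hitE X x a (s + m * n) k) ≤ 2⁻¹ ^ n := by
    intro n
    induction n with
    | zero => intro s; simpa using prob_le_one
    | succ n ih =>
        intro s
        have : s + m * (n + 1) = (s + m * n) + m := by ring
        rw [this]
        calc μ (⋃ k, hitE X x a ((s + m * n) + m) k)
            ≤ 2⁻¹ * μ (⋃ k, hitE X x a (s + m * n) k) :=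
              my_key_step μ X hX hindX hidX m hm hB x a (s + m * n)
          _ ≤ 2⁻¹ * 2⁻¹ ^ n := mul_le_mul_right (ih s) _
          _ = 2⁻¹ ^ (n + 1) := (pow_succ' 2⁻¹ n).symm
  have := haux (r / m) (r % m)
  rwa [Nat.mod_add_div r m] at this

end ChunkE

section ChunkF

variable {Ω : Type*} [MeasurableSpace Ω]

lemma my_moment_eq (μ : Measure Ω) [IsProbabilityMeasure μ] (X A : ℕ → Ω → ℝ)
    (hmeasX : ∀ i, Measurable (X i)) (hmeasA : ∀ i, Measurable (A i))
    (hindep : iIndepFun (fun i ω => (X i ω, A i ω)) μ)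
    (hident : ∀ i, IdentDistrib (fun ω => (X i ω, A i ω)) (fun ω => (X 0 ω, A 0 ω)) μ μ)
    (p : ℝ) (hp : 0 < p) (x a : ℝ) (r : ℕ) :
    ∫⁻ ω, (∑' k, (hitE X x a r k).indicator (fun ω' => ENNReal.ofReal (A k ω')) ω) ^ p ∂μ
      = (∫⁻ ω, ENNReal.ofReal (A 0 ω) ^ p ∂μ) * μ (⋃ k, hitE X x a r k) := by
  classical
  have hEmeas : ∀ k, MeasurableSet (hitE X x a r k) :=
    fun k => measurableSet_hitE X hmeasX x a r k
  -- pointwise disjointness of the indicators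
  have hptwise : ∀ ω, (∑' k, (hitE X x a r k).indicator
        (fun ω' => ENNReal.ofReal (A k ω')) ω) ^ p
      = ∑' k, ((hitE X x a r k).indicator (fun ω' => ENNReal.ofReal (A k ω')) ω) ^ p := by
    intro ω
    refine my_tsum_rpow_of_disjoint _ hp fun k k' hkk => ?_
    by_cases hk : ω ∈ hitE X x a r k
    · right
      have hk' : ω ∉ hitE X x a r k' := by
        intro hk'
        rcases lt_or_gt_of_ne hkk with h | h
        · have := hitE_disjoint X x a r h
          exact absurd (Set.mem_inter hk hk') (by rw [this]; exact Set.notMem_empty ω)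
        · have := hitE_disjoint X x a r h
          exact absurd (Set.mem_inter hk' hk) (by rw [this]; exact Set.notMem_empty ω)
      rw [Set.indicator_of_notMem hk']
    · left
      rw [Set.indicator_of_notMem hk]
  simp_rw [hptwise]
  rw [lintegral_tsum (fun k => (((hmeasA k).ennreal_ofReal.indicator (hEmeas k)).pow
        measurable_const).aemeasurable)]
  -- per-k computation
  have hterm : ∀ k, ∫⁻ ω, ((hitE X x a r k).indicator
        (fun ω' => ENNReal.ofReal (A k ω')) ω) ^ p ∂μ
      = (∫⁻ ω, ENNReal.ofReal (A 0 ω) ^ p ∂μ) * μ (hitE X x a r k) := by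
    intro k
    -- rewrite indicator-power as a product
    have hsplit : (fun ω => ((hitE X x a r k).indicator
          (fun ω' => ENNReal.ofReal (A k ω')) ω) ^ p)
        = (fun ω => ENNReal.ofReal (A k ω) ^ p)
          * (fun ω => (hitE X x a r k).indicator (fun _ => (1:ℝ≥0∞)) ω) := by
      funext ω
      by_cases h : ω ∈ hitE X x a r k
      · simp [Set.indicator_of_mem h]
      · simp [Set.indicator_of_notMem h, ENNReal.zero_rpow_of_pos hp]
    -- independence
    obtain ⟨s, hs, he⟩ := my_hitE_preimage X x a r k
    have hmem : k ∈ ({k} : Finset ℕ) := Finset.mem_singleton_self k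
    have hbase := hindep.indepFun_finset {k} (Finset.range k)
      (by simp [Finset.disjoint_left]) (fun i => (hmeasX i).prodMk (hmeasA i))
    set φ : ((i : ({k} : Finset ℕ)) → ℝ × ℝ) → ℝ≥0∞ :=
      fun v => ENNReal.ofReal (v ⟨k, hmem⟩).2 ^ p with hφ
    set ψ : ((i : (Finset.range k : Finset ℕ)) → ℝ × ℝ) → ℝ≥0∞ :=
      fun v => s.indicator (fun _ => (1:ℝ≥0∞))
        (fun l : Fin k => (v ⟨l.1, Finset.mem_range.mpr l.2⟩).1) with hψ
    have hφm : Measurable φ :=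
      ((measurable_pi_apply _).snd.ennreal_ofReal).pow measurable_const
    have hψm : Measurable ψ := by
      have : Measurable fun (v : (i : (Finset.range k : Finset ℕ)) → ℝ × ℝ) =>
          (fun l : Fin k => (v ⟨l.1, Finset.mem_range.mpr l.2⟩).1) :=
        measurable_pi_lambda _ fun l => (measurable_pi_apply _).fst
      exact ((measurable_const.indicator hs)).comp this
    have hind2 : IndepFun (fun ω => ENNReal.ofReal (A k ω) ^ p)
        (fun ω => (hitE X x a r k).indicator (fun _ => (1:ℝ≥0∞)) ω) μ := by
      have h := hbase.comp hφm hψm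
      have hgeq : (ψ ∘ fun ω (i : (Finset.range k : Finset ℕ)) => (X i ω, A i ω))
          = fun ω => (hitE X x a r k).indicator (fun _ => (1:ℝ≥0∞)) ω := by
        funext ω
        by_cases hmemE : ω ∈ hitE X x a r k
        · have : (fun l : Fin k => X l ω) ∈ s := by rw [he] at hmemE; exact hmemE
          simp only [Function.comp_apply, hψ, Set.indicator_of_mem this,
            Set.indicator_of_mem hmemE]
        · have : (fun l : Fin k => X l ω) ∉ s := by rw [he] at hmemE; exact hmemE
          simp only [Function.comp_apply, hψ, Set.indicator_of_notMem this,
            Set.indicator_of_notMem hmemE]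
      rw [← hgeq]
      exact h
    rw [hsplit, lintegral_mul_eq_lintegral_mul_lintegral_of_indepFun
      ((hmeasA k).ennreal_ofReal.pow measurable_const)
      (measurable_const.indicator (hEmeas k)) hind2]
    congr 1
    · -- identical distribution
      have hid : IdentDistrib (fun ω => ENNReal.ofReal (A k ω) ^ p)
          (fun ω => ENNReal.ofReal (A 0 ω) ^ p) μ μ := by
        have h1 : IdentDistrib (A k) (A 0) μ μ := (hident k).comp measurable_snd
        exact h1.comp (ENNReal.measurable_ofReal.pow measurable_const)
      exact hid.lintegral_eq
    · exact lintegral_indicator_one (hEmeas k)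
  simp_rw [hterm]
  rw [ENNReal.tsum_mul_left, measure_iUnion (fun k k' hkk => by
    rcases lt_or_gt_of_ne hkk with h | h
    · exact Set.disjoint_iff_inter_eq_empty.mpr (hitE_disjoint X x a r h)
    · exact (Set.disjoint_iff_inter_eq_empty.mpr (hitE_disjoint X x a r h)).symm) hEmeas]

end ChunkF





lemma my_pow_rpow (x : ℝ≥0∞) (n : ℕ) (q : ℝ) : (x ^ n) ^ q = (x ^ q) ^ n := by
  rw [← ENNReal.rpow_natCast x n, ← ENNReal.rpow_mul, mul_comm, ENNReal.rpow_mul,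
    ENNReal.rpow_natCast]

lemma my_rpow_inv (x : ℝ≥0∞) {q : ℝ} (hq : q ≠ 0) : (x ^ q) ^ (1/q) = x := by
  rw [← ENNReal.rpow_mul, mul_one_div_cancel hq, ENNReal.rpow_one]

lemma my_walk_le_of_lt_hitAbove {X : ℕ → Ω → ℝ} {x t : ℝ} {k : ℕ} {ω : Ω}
    (h : (k : ℕ∞) < hitAbove X x t ω) : walk X x k ω ≤ t := by
  by_contra hc
  push_neg at hc
  have : hitAbove X x t ω ≤ (k : ℕ∞) := by
    refine iInf_le_of_le k ?_
    exact iInf_le_of_le hc le_rfl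
  exact absurd h (not_lt.mpr this)


end AuxiliaryLemmas

/-- Lemma `l:positivewalk`. Let `(S_n)` be a random walk with positive drift
`E[S_1] > 0` and `E[S_1^2] < ∞`, and let `(a_i, S_i - S_{i-1})_{i ≥ 1}` be i.i.d. pairs with
`a_i ≥ 0` a.s. (here `A k` is `a_{k+1}`, paired with the `(k+1)`-st increment `X k`). For every
`p ≥ 1` with `E[a_1^p] < ∞` and every `κ > 0` there is a constant `c > 0` such that
`E_x[(∑_{k=0}^{τ_t^+ - 1} a_{k+1} e^{κ(S_k - t)})^p] ≤ c` for all `t > 0` and all `x ≤ t`. -/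
theorem positive_drift_exponential_sum_moment_bound
    (μ : Measure Ω) [IsProbabilityMeasure μ]
    (X A : ℕ → Ω → ℝ)
    (hmeasX : ∀ i, Measurable (X i)) (hmeasA : ∀ i, Measurable (A i))
    (hindep : iIndepFun (fun i ω => (X i ω, A i ω)) μ)
    (hident : ∀ i, IdentDistrib (fun ω => (X i ω, A i ω)) (fun ω => (X 0 ω, A 0 ω)) μ μ)
    (hA : ∀ i, ∀ᵐ ω ∂μ, 0 ≤ A i ω)
    (hdrift : 0 < ∫ ω, X 0 ω ∂μ)
    (hmom2 : Integrable (fun ω => (X 0 ω) ^ 2) μ)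
    (p : ℝ) (hp : 1 ≤ p)
    (hAp : ∫⁻ ω, ENNReal.ofReal (A 0 ω) ^ p ∂μ < ⊤)
    (κ : ℝ) (hκ : 0 < κ) :
    ∃ c : ℝ, 0 < c ∧ ∀ t : ℝ, 0 < t → ∀ x : ℝ, x ≤ t →
      ∫⁻ ω, (∑' k : ℕ, if (k : ℕ∞) < hitAbove X x t ω
          then ENNReal.ofReal (A k ω * Real.exp (κ * (walk X x k ω - t))) else 0) ^ p ∂μ
        ≤ ENNReal.ofReal c := by
  classical
  have hp0 : (0:ℝ) < p := lt_of_lt_of_le one_pos hp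
  -- independence and identical distribution of X alone
  have hindX : iIndepFun X μ := by
    have h := hindep.comp (fun _ => Prod.fst) (fun _ => measurable_fst)
    exact h
  have hidX : ∀ i, IdentDistrib (X i) (X 0) μ μ := fun i => (hident i).comp measurable_fst
  -- integrability of X 0
  have hint : Integrable (X 0) μ := by
    refine Integrable.mono' ((integrable_const (1:ℝ)).add hmom2)
      (hmeasX 0).aestronglyMeasurable (ae_of_all _ fun ω => ?_)
    have h1 : ‖X 0 ω‖ = |X 0 ω| := Real.norm_eq_abs _
    have h2 : ((fun _ : Ω => (1:ℝ)) + fun ω => X 0 ω ^ 2) ω = 1 + X 0 ω ^ 2 := rfl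
    rw [h1, h2]
    nlinarith [sq_nonneg (|X 0 ω| - 1), sq_abs (X 0 ω)]
  -- the horizon m
  obtain ⟨m, hm1, hB⟩ := my_exists_horizon μ X hmeasX
    (fun i j hij => (hindep.indepFun hij).comp measurable_fst measurable_fst)
    hidX hint hdrift
  -- constants
  set KP : ℝ≥0∞ := ∫⁻ ω, ENNReal.ofReal (A 0 ω) ^ p ∂μ with hKP
  set cE : ℝ≥0∞ := ENNReal.ofReal (Real.exp (-κ)) with hcE
  set η : ℝ≥0∞ := (2⁻¹ : ℝ≥0∞) ^ (1/p) with hη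
  have hcE1 : cE < 1 := by
    rw [hcE, ← ENNReal.ofReal_one]
    exact ENNReal.ofReal_lt_ofReal_iff_of_nonneg (Real.exp_nonneg _) |>.mpr
      (Real.exp_lt_one_iff.mpr (by linarith))
  have hη1 : η < 1 := ENNReal.rpow_lt_one (by norm_num) (by positivity)
  set Stot : ℝ≥0∞ := (1 - cE)⁻¹ * (KP ^ (1/p) * ((m : ℝ≥0∞) * (1 - η)⁻¹)) with hStot
  have hStopne : Stot ≠ ⊤ := by
    rw [hStot]
    apply ENNReal.mul_ne_top
    · rw [Ne, ENNReal.inv_eq_top]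
      · exact (tsub_pos_iff_lt.mpr hcE1).ne'
    apply ENNReal.mul_ne_top
    · exact (ENNReal.rpow_lt_top_of_nonneg (by positivity) hAp.ne).ne
    apply ENNReal.mul_ne_top
    · exact ENNReal.natCast_ne_top m
    · rw [Ne, ENNReal.inv_eq_top]
      exact (tsub_pos_iff_lt.mpr hη1).ne'
  have hEne : Stot ^ p ≠ ⊤ := (ENNReal.rpow_lt_top_of_nonneg hp0.le hStopne).ne
  refine ⟨(Stot ^ p).toReal + 1, by positivity, ?_⟩
  intro t ht x hx
  -- the component functions
  set u : ℕ × ℕ → Ω → ℝ≥0∞ := fun q ω => cE ^ q.1 *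
      ∑' k, (hitE X x (t - q.1 - 1) q.2 k).indicator (fun ω' => ENNReal.ofReal (A k ω')) ω
    with hu
  have humeas : ∀ q, Measurable (u q) := by
    intro q
    exact (Measurable.ennreal_tsum fun k =>
      (hmeasA k).ennreal_ofReal.indicator (measurableSet_hitE X hmeasX x _ q.2 k)).const_mul _
  -- pointwise domination
  have hpt : ∀ ω, (∑' k : ℕ, if (k : ℕ∞) < hitAbove X x t ω
      then ENNReal.ofReal (A k ω * Real.exp (κ * (walk X x k ω - t))) else 0)
      ≤ ∑' q : ℕ × ℕ, u q ω := by
    intro ω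
    have h1 : ∀ k : ℕ, (if (k : ℕ∞) < hitAbove X x t ω
        then ENNReal.ofReal (A k ω * Real.exp (κ * (walk X x k ω - t))) else 0)
        ≤ ∑' q : ℕ × ℕ, cE ^ q.1 *
          (hitE X x (t - q.1 - 1) q.2 k).indicator (fun ω' => ENNReal.ofReal (A k ω')) ω := by
      intro k
      by_cases hlt : (k : ℕ∞) < hitAbove X x t ω
      · rw [if_pos hlt]
        have hwle : walk X x k ω ≤ t := my_walk_le_of_lt_hitAbove hlt
        set j0 : ℕ := ⌊t - walk X x k ω⌋₊ with hj0
        set r0 : ℕ := ((Finset.range k).filter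
          (fun l => walk X x l ω ∈ Set.Ioc (t - j0 - 1) ((t - j0 - 1) + 1))).card with hr0
        have hfl : (j0 : ℝ) ≤ t - walk X x k ω := Nat.floor_le (by linarith)
        have hfl2 : t - walk X x k ω < j0 + 1 := Nat.lt_floor_add_one _
        have hmemIoc : walk X x k ω ∈ Set.Ioc (t - j0 - 1) ((t - j0 - 1) + 1) := by
          constructor <;> [linarith; linarith]
        have hmemE : ω ∈ hitE X x (t - j0 - 1) r0 k := ⟨hmemIoc, rfl⟩
        refine le_trans ?_ (ENNReal.le_tsum (j0, r0))
        simp only [Set.indicator_of_mem hmemE]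
        rw [ENNReal.ofReal_mul' (Real.exp_nonneg _)]
        rw [mul_comm (ENNReal.ofReal (A k ω)) _]
        refine mul_le_mul' ?_ le_rfl
        have hexple : Real.exp (κ * (walk X x k ω - t)) ≤ Real.exp (-κ) ^ j0 := by
          rw [← Real.exp_nat_mul]
          apply Real.exp_le_exp.mpr
          have : walk X x k ω - t ≤ -(j0 : ℝ) := by linarith
          calc κ * (walk X x k ω - t) ≤ κ * (-(j0:ℝ)) :=
                mul_le_mul_of_nonneg_left this hκ.le
            _ = (j0 : ℝ) * (-κ) := by ring
        calc ENNReal.ofReal (Real.exp (κ * (walk X x k ω - t)))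
            ≤ ENNReal.ofReal (Real.exp (-κ) ^ j0) := ENNReal.ofReal_le_ofReal hexple
          _ = cE ^ j0 := by rw [hcE, ENNReal.ofReal_pow (Real.exp_nonneg _)]
      · rw [if_neg hlt]; exact zero_le
    calc (∑' k : ℕ, if (k : ℕ∞) < hitAbove X x t ω
        then ENNReal.ofReal (A k ω * Real.exp (κ * (walk X x k ω - t))) else 0)
        ≤ ∑' k : ℕ, ∑' q : ℕ × ℕ, cE ^ q.1 *
          (hitE X x (t - q.1 - 1) q.2 k).indicator (fun ω' => ENNReal.ofReal (A k ω')) ω :=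
          ENNReal.tsum_le_tsum h1
      _ = ∑' q : ℕ × ℕ, ∑' k : ℕ, cE ^ q.1 *
          (hitE X x (t - q.1 - 1) q.2 k).indicator (fun ω' => ENNReal.ofReal (A k ω')) ω :=
          ENNReal.tsum_comm
      _ = ∑' q : ℕ × ℕ, u q ω := tsum_congr fun q => ENNReal.tsum_mul_left
  -- Minkowski
  have hmink : (∫⁻ ω, (∑' q : ℕ × ℕ, u q ω) ^ p ∂μ) ^ (1/p)
      ≤ ∑' q : ℕ × ℕ, (∫⁻ ω, u q ω ^ p ∂μ) ^ (1/p) :=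
    my_minkowski_tsum u humeas hp
  -- per-term bound
  have hterm : ∀ q : ℕ × ℕ, (∫⁻ ω, u q ω ^ p ∂μ) ^ (1/p)
      ≤ cE ^ q.1 * (KP ^ (1/p) * η ^ (q.2 / m)) := by
    rintro ⟨j, r⟩
    have hgmeas : Measurable fun ω => ∑' k, (hitE X x (t - j - 1) r k).indicator
        (fun ω' => ENNReal.ofReal (A k ω')) ω :=
      Measurable.ennreal_tsum fun k =>
        (hmeasA k).ennreal_ofReal.indicator (measurableSet_hitE X hmeasX x _ r k)
    have h1 : ∫⁻ ω, u (j, r) ω ^ p ∂μ = (cE ^ j) ^ p *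
        ∫⁻ ω, (∑' k, (hitE X x (t - j - 1) r k).indicator
          (fun ω' => ENNReal.ofReal (A k ω')) ω) ^ p ∂μ := by
      simp_rw [hu, ENNReal.mul_rpow_of_nonneg _ _ hp0.le]
      rw [lintegral_const_mul _ (hgmeas.pow measurable_const)]
    rw [h1]
    have h2 := my_moment_eq μ X A hmeasX hmeasA hindep hident p hp0 x (t - j - 1) r
    rw [h2]
    have h3 : μ (⋃ k, hitE X x (t - j - 1) r k) ≤ 2⁻¹ ^ (r / m) :=
      my_geom_bound μ X hmeasX hindX hidX m hm1 hB x (t - j - 1) r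
    calc ((cE ^ j) ^ p * (KP * μ (⋃ k, hitE X x (t - j - 1) r k))) ^ (1/p)
        ≤ ((cE ^ j) ^ p * (KP * 2⁻¹ ^ (r / m))) ^ (1/p) := by
          apply ENNReal.rpow_le_rpow _ (by positivity)
          exact mul_le_mul_right (mul_le_mul_right h3 _) _
      _ = cE ^ j * (KP ^ (1/p) * η ^ (r / m)) := by
          rw [ENNReal.mul_rpow_of_nonneg _ _ (by positivity : (0:ℝ) ≤ 1/p)]
          rw [ENNReal.mul_rpow_of_nonneg _ _ (by positivity : (0:ℝ) ≤ 1/p)]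
          rw [my_rpow_inv _ hp0.ne', hη, my_pow_rpow]
  -- sum the bounds
  have hsum : ∑' q : ℕ × ℕ, (cE ^ q.1 * (KP ^ (1/p) * η ^ (q.2 / m))) ≤ Stot := by
    rw [ENNReal.tsum_prod']
    have h1 : ∀ j : ℕ, ∑' r : ℕ, (cE ^ j * (KP ^ (1/p) * η ^ (r / m)))
        = cE ^ j * (KP ^ (1/p) * ∑' r : ℕ, η ^ (r / m)) := by
      intro j
      rw [ENNReal.tsum_mul_left, ENNReal.tsum_mul_left]
    simp_rw [h1]
    rw [ENNReal.tsum_mul_right, ENNReal.tsum_geometric]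
    have h2 : ∑' r : ℕ, η ^ (r / m) ≤ (m : ℝ≥0∞) * (1 - η)⁻¹ := by
      haveI : NeZero m := ⟨by omega⟩
      have he := Equiv.tsum_eq (Nat.divModEquiv m).symm (fun r : ℕ => η ^ (r / m))
      rw [← he]
      have h3 : ∀ q : ℕ × Fin m, η ^ (((Nat.divModEquiv m).symm q) / m) = η ^ q.1 := by
        rintro ⟨a, b⟩
        have : ((Nat.divModEquiv m).symm (a, b) : ℕ) = a * m + b := rfl
        rw [this]
        congr 1
        rw [mul_comm, Nat.mul_add_div (by omega), Nat.div_eq_of_lt b.2, add_zero]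
      rw [tsum_congr h3]
      rw [ENNReal.tsum_prod']
      have h4 : ∀ a : ℕ, ∑' _ : Fin m, η ^ a = (m : ℝ≥0∞) * η ^ a := by
        intro a
        rw [tsum_fintype]
        simp [Finset.sum_const, Finset.card_univ, nsmul_eq_mul]
      rw [tsum_congr h4, ENNReal.tsum_mul_left, ENNReal.tsum_geometric]
    rw [hStot]
    exact mul_le_mul_right (mul_le_mul_right h2 _) _
  -- final chain
  have hS : (∫⁻ ω, (∑' q : ℕ × ℕ, u q ω) ^ p ∂μ) ^ (1/p) ≤ Stot :=
    le_trans hmink (le_trans (ENNReal.tsum_le_tsum hterm) hsum)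
  have hfinal : (∫⁻ ω, (∑' k : ℕ, if (k : ℕ∞) < hitAbove X x t ω
      then ENNReal.ofReal (A k ω * Real.exp (κ * (walk X x k ω - t))) else 0) ^ p ∂μ)
      ≤ Stot ^ p := by
    have hle1 : (∫⁻ ω, (∑' k : ℕ, if (k : ℕ∞) < hitAbove X x t ω
        then ENNReal.ofReal (A k ω * Real.exp (κ * (walk X x k ω - t))) else 0) ^ p ∂μ)
        ≤ ∫⁻ ω, (∑' q : ℕ × ℕ, u q ω) ^ p ∂μ :=
      lintegral_mono fun ω => ENNReal.rpow_le_rpow (hpt ω) hp0.le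
    refine le_trans hle1 ?_
    have := ENNReal.rpow_le_rpow hS hp0.le
    rwa [← ENNReal.rpow_mul, one_div_mul_cancel hp0.ne', ENNReal.rpow_one] at this
  refine le_trans hfinal ?_
  calc Stot ^ p = ENNReal.ofReal ((Stot ^ p).toReal) := (ENNReal.ofReal_toReal hEne).symm
    _ ≤ ENNReal.ofReal ((Stot ^ p).toReal + 1) := ENNReal.ofReal_le_ofReal (by linarith)
end

section
/- Let (S_n) be a centered real random walk with Var(S_1) > 0 and E[e^{u S_1}] < ∞ for all u ∈ (−(1+η), η) for some η > 0. Then there exists a constant c > 1 such that for all L ≥ 1 and all 0 ≤ a ≤ L: E_a[ e^{−S_{τ_0^-}} · 1_{{τ_0^- < τ_L^+}} ] ≤ c · (L − a + 1)/L. -/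
open MeasureTheory ProbabilityTheory Filter Topology Real
open scoped ENNReal NNReal

variable {Ω : Type*} [MeasurableSpace Ω]

set_option linter.unusedSectionVars false


private lemma aux_quarter_sq {x : ℝ} (hx : 0 ≤ x) : (1 + x/4)^2 ≤ Real.exp (x/2) := by
  have h := Real.add_one_le_exp (x/4)
  have h0 : (0:ℝ) ≤ 1 + x/4 := by linarith
  have h2 : (1 + x/4)^2 ≤ (Real.exp (x/4))^2 := by
    have := Real.exp_pos (x/4)
    nlinarith
  calc (1 + x/4)^2 ≤ (Real.exp (x/4))^2 := h2
    _ = Real.exp (x/2) := by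
        rw [sq, ← Real.exp_add]; congr 1; ring

private lemma aux_exp_half_le {L a : ℝ} (hL : 1 ≤ L) (ha : 0 ≤ a) (haL : a ≤ L) :
    Real.exp (-(a/2)) ≤ (L - a + 1)/L := by
  have h1 : (1 + a/4)^2 ≤ Real.exp (a/2) := aux_quarter_sq ha
  have hp : 0 < Real.exp (a/2) := Real.exp_pos _
  have hL0 : (0:ℝ) < L := by linarith
  rw [Real.exp_neg, inv_eq_one_div, div_le_div_iff₀ hp hL0]
  have hkey : L ≤ (L - a + 1) * (1 + a/4)^2 := by nlinarith [mul_nonneg (sub_nonneg.mpr haL) ha, sq_nonneg (1 - a/4)]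
  have h3 : (L - a + 1) * (1 + a/4)^2 ≤ (L - a + 1) * Real.exp (a/2) := by
    apply mul_le_mul_of_nonneg_left h1; linarith
  linarith

private lemma aux_self_le_exp_half {L : ℝ} (hL : 1 ≤ L) : L * Real.exp (-(L/2)) ≤ 1 := by
  have h1 : (1 + L/4)^2 ≤ Real.exp (L/2) := aux_quarter_sq (by linarith)
  have hp : 0 < Real.exp (L/2) := Real.exp_pos _
  have h2 : L ≤ Real.exp (L/2) := by nlinarith [sq_nonneg (1 - L/4)]
  rw [Real.exp_neg]
  calc L * (Real.exp (L/2))⁻¹ ≤ Real.exp (L/2) * (Real.exp (L/2))⁻¹ := by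
        apply mul_le_mul_of_nonneg_right h2; positivity
    _ = 1 := by field_simp

private lemma mgf_gt_one (ν : Measure ℝ) [IsProbabilityMeasure ν] {u : ℝ} (hu : u ≠ 0)
    (hint : Integrable (fun t => Real.exp (u * t)) ν)
    (hid : Integrable (fun t : ℝ => t) ν)
    (hmean : ∫ t, t ∂ν = 0) (hpos : 0 < ν {t : ℝ | t ≠ 0}) :
    1 < ∫ t, Real.exp (u * t) ∂ν := by
  have hlin : Integrable (fun t : ℝ => 1 + u * t) ν := (integrable_const 1).add (hid.const_mul u)
  have hfi : Integrable (fun t => Real.exp (u*t) - (1 + u*t)) ν := hint.sub hlin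
  have hnn : ∀ t : ℝ, 0 ≤ Real.exp (u*t) - (1 + u*t) := by
    intro t; have := Real.add_one_le_exp (u*t); linarith
  have hsupp : Function.support (fun t => Real.exp (u*t) - (1 + u*t)) = {t : ℝ | t ≠ 0} := by
    ext t
    simp only [Function.mem_support, Set.mem_setOf_eq, sub_ne_zero]
    constructor
    · intro h ht; subst ht; simp at h
    · intro ht
      have : u * t ≠ 0 := mul_ne_zero hu ht
      have := Real.add_one_lt_exp this
      intro hc; rw [hc] at this; linarith
  have hposint : 0 < ∫ t, (Real.exp (u*t) - (1 + u*t)) ∂ν := by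
    rw [integral_pos_iff_support_of_nonneg_ae (Filter.Eventually.of_forall hnn) hfi, hsupp]
    exact hpos
  rw [integral_sub hint hlin, integral_add (integrable_const 1) (hid.const_mul u),
    integral_const, integral_const_mul, hmean] at hposint
  simp at hposint
  linarith

set_option maxHeartbeats 2000000 in
private lemma phi_family (ν : Measure ℝ) [IsProbabilityMeasure ν]
    (η : ℝ) (hη : 0 < η)
    (hint : ∀ u : ℝ, -(1 + η) < u → u < η → Integrable (fun t => Real.exp (u * t)) ν)
    (hmean : ∫ t, t ∂ν = 0)
    (hpos : 0 < ν {t : ℝ | t ≠ 0}) :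
    ∃ c : ℝ, 1 < c ∧ ∀ L : ℝ, 1 ≤ L →
      ∃ Φ : ℝ → ℝ, Measurable Φ ∧ (∀ y, 0 ≤ Φ y) ∧
        (∀ y, y < 0 → Real.exp (-y) ≤ Φ y) ∧
        (∀ x, 0 ≤ x → x ≤ L →
          Integrable (fun t => Φ (x + t)) ν ∧ ∫ t, Φ (x + t) ∂ν ≤ Φ x) ∧
        (∀ a, 0 ≤ a → a ≤ L → Φ a ≤ c * (L - a + 1) / L) := by
  obtain ⟨δ, δ', hδ, hδδ', hδ'η⟩ : ∃ δ δ' : ℝ, 0 < δ ∧ δ < δ' ∧ δ' < η :=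
    ⟨η/3, 2*η/3, by linarith, by linarith, by linarith⟩
  have hδ' : 0 < δ' := lt_trans hδ hδδ'
  -- integrability of the four exponentials
  have h1 : Integrable (fun t => Real.exp (-1 * t)) ν := hint (-1) (by linarith) (by linarith)
  have hh : Integrable (fun t => Real.exp (-(1/2) * t)) ν := hint (-(1/2)) (by linarith) (by linarith)
  have hd : Integrable (fun t => Real.exp (δ * t)) ν := hint δ (by linarith) (by linarith)
  have hd' : Integrable (fun t => Real.exp (δ' * t)) ν := hint δ' (by linarith) (by linarith)
  -- integrability of the identity
  have hid : Integrable (fun t : ℝ => t) ν := by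
    refine Integrable.mono' ((hd.const_mul (1/δ)).add (hh.const_mul 2))
      aestronglyMeasurable_id (Filter.Eventually.of_forall fun t => ?_)
    simp only [Pi.add_apply, Real.norm_eq_abs]
    rcases le_or_gt 0 t with ht | ht
    · have h1 : δ * t ≤ Real.exp (δ * t) := by
        have := Real.add_one_le_exp (δ * t); linarith
      have h2 : (0:ℝ) ≤ 2 * Real.exp (-(1/2) * t) := by positivity
      rw [abs_of_nonneg ht]
      have h3 : t ≤ 1/δ * Real.exp (δ * t) := by
        rw [one_div, inv_mul_eq_div, le_div_iff₀ hδ]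
        nlinarith
      linarith
    · have h1 : -(1/2) * t ≤ Real.exp (-(1/2) * t) := by
        have := Real.add_one_le_exp (-(1/2) * t); linarith
      have h2 : (0:ℝ) ≤ 1/δ * Real.exp (δ * t) := by positivity
      rw [abs_of_neg ht]
      linarith
  set φ1 : ℝ := ∫ t, Real.exp (-1 * t) ∂ν with hφ1def
  set φh : ℝ := ∫ t, Real.exp (-(1/2) * t) ∂ν with hφhdef
  set ψ : ℝ := ∫ t, Real.exp (δ * t) ∂ν with hψdef
  set ψ' : ℝ := ∫ t, Real.exp (δ' * t) ∂ν with hψ'def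
  have hφ1 : 1 < φ1 := mgf_gt_one ν (by norm_num) h1 hid hmean hpos
  have hφh : 1 < φh := mgf_gt_one ν (by norm_num) hh hid hmean hpos
  have hψ1 : 1 < ψ := mgf_gt_one ν (ne_of_gt hδ) hd hid hmean hpos
  have hψ'1 : 1 < ψ' := mgf_gt_one ν (ne_of_gt hδ') hd' hid hmean hpos
  clear_value φ1 φh ψ ψ'
  obtain ⟨ε, hε, hεe⟩ : ∃ ε : ℝ, 0 ≤ ε ∧ ε * (φh - 1) = 2*(φ1 - 1) :=
    ⟨2*(φ1 - 1)/(φh - 1), div_nonneg (by linarith) (by linarith),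
      div_mul_cancel₀ _ (by intro h; rw [sub_eq_zero] at h; linarith)⟩
  obtain ⟨A, hA1, hAε, hA0, hAq⟩ :
      ∃ A : ℝ, 1 ≤ A ∧ ε ≤ A ∧ 0 < A ∧ ∀ s : ℝ, 0 ≤ s^2 - ε*s + A := by
    refine ⟨ε^2/4 + ε + 1, by nlinarith [sq_nonneg ε], by nlinarith [sq_nonneg ε],
      by nlinarith [sq_nonneg ε], fun s => by nlinarith [sq_nonneg (s - ε/2)]⟩
  obtain ⟨B, hB1, hBkey⟩ : ∃ B : ℝ, 1 ≤ B ∧ (ψ' - 1) * Real.exp (-(δ' - δ)*B) ≤ (ψ - 1)/2 := by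
    refine ⟨1 + max 0 (Real.log (2*(ψ' - 1)/(ψ - 1)) / (δ' - δ)), by
      have := le_max_left (0:ℝ) (Real.log (2*(ψ' - 1)/(ψ - 1)) / (δ' - δ)); linarith, ?_⟩
    set B := 1 + max 0 (Real.log (2*(ψ' - 1)/(ψ - 1)) / (δ' - δ)) with hBd
    have hq : (0:ℝ) < 2*(ψ' - 1)/(ψ - 1) := by apply div_pos <;> linarith
    have hlog : Real.log (2*(ψ' - 1)/(ψ - 1)) ≤ (δ' - δ)*B := by
      have h1 : Real.log (2*(ψ' - 1)/(ψ - 1)) / (δ' - δ) ≤ B := by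
        rw [hBd]
        have := le_max_right (0:ℝ) (Real.log (2*(ψ' - 1)/(ψ - 1)) / (δ' - δ)); linarith
      calc Real.log (2*(ψ' - 1)/(ψ - 1))
          = (Real.log (2*(ψ' - 1)/(ψ - 1)) / (δ' - δ)) * (δ' - δ) :=
            (div_mul_cancel₀ _ (ne_of_gt (show (0:ℝ) < δ' - δ by linarith))).symm
        _ ≤ B * (δ' - δ) := by apply mul_le_mul_of_nonneg_right h1; linarith
        _ = (δ' - δ)*B := by ring
    have h2 : 2*(ψ' - 1)/(ψ - 1) ≤ Real.exp ((δ' - δ)*B) := by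
      rw [← Real.exp_log hq]; exact Real.exp_le_exp.mpr hlog
    have h3 : 2*(ψ' - 1) ≤ (ψ - 1) * Real.exp ((δ' - δ)*B) := by
      rw [div_le_iff₀ (by linarith : (0:ℝ) < ψ - 1)] at h2; linarith
    have h4 : Real.exp (-(δ' - δ)*B) = (Real.exp ((δ' - δ)*B))⁻¹ := by
      rw [← Real.exp_neg]; congr 1; ring
    rw [h4, ← div_eq_mul_inv, div_le_iff₀ (Real.exp_pos _)]
    nlinarith [Real.exp_pos ((δ' - δ)*B)]
  have hB0 : (0:ℝ) < B := by linarith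
  obtain ⟨κ3, κ2, hκ2, hκ3, hκ2d, hκ3a, hκ3b⟩ :
      ∃ κ3 κ2 : ℝ, 0 < κ2 ∧ 0 < κ3 ∧ κ2 = κ3/2 ∧ ε*Real.exp (δ'*B) ≤ κ3/2 ∧
        κ2 + A/δ' + ε ≤ κ3 := by
    have he := Real.exp_pos (δ'*B)
    have hAδ : 0 < A/δ' := div_pos hA0 hδ'
    have hte : 0 ≤ ε*Real.exp (δ'*B) := mul_nonneg hε he.le
    exact ⟨2*(ε*Real.exp (δ'*B) + A/δ' + ε), (ε*Real.exp (δ'*B) + A/δ' + ε), by linarith,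
      by linarith, by ring, by linarith, by linarith⟩
  set c : ℝ := 3 + A*B + κ2 + κ3 with hcdef
  have hc : 1 < c := by
    have hAB : 0 < A*B := mul_pos hA0 hB0
    rw [hcdef]; linarith
  refine ⟨c, hc, ?_⟩
  intro L hL
  have hL0 : (0:ℝ) < L := by linarith
  set Φ : ℝ → ℝ := fun y => 2*Real.exp (-y) - ε*Real.exp (-(y/2)) + (A/L)*(L+B-y)
      + (κ2/L)*(1 - Real.exp (δ*(y-L-B))) + (κ3/L)*Real.exp (δ'*(y-L-B)) with hΦ
  have hΦy : ∀ y : ℝ, Φ y = 2*Real.exp (-y) - ε*Real.exp (-(y/2)) + (A/L)*(L+B-y)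
      + (κ2/L)*(1 - Real.exp (δ*(y-L-B))) + (κ3/L)*Real.exp (δ'*(y-L-B)) := fun y => rfl
  have hmid : ∀ y : ℝ, y ≤ L → 0 ≤ (κ2/L)*(1 - Real.exp (δ*(y-L-B))) := by
    intro y hy
    apply mul_nonneg (div_nonneg hκ2.le hL0.le)
    have : Real.exp (δ*(y-L-B)) ≤ 1 := by
      rw [Real.exp_le_one_iff]
      exact mul_nonpos_of_nonneg_of_nonpos hδ.le (by linarith)
    linarith
  -- payoff domination on y ≤ 0
  have hpay : ∀ y : ℝ, y ≤ 0 → Real.exp (-y) ≤ Φ y := by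
    intro y hy
    rw [hΦy]
    have hs : Real.exp (-y) = Real.exp (-(y/2)) * Real.exp (-(y/2)) := by
      rw [← Real.exp_add]; congr 1; ring
    have h3 : A ≤ (A/L)*(L+B-y) := by
      rw [div_mul_eq_mul_div, le_div_iff₀ hL0]
      nlinarith
    have h4 : 0 ≤ (κ2/L)*(1 - Real.exp (δ*(y-L-B))) := hmid y (by linarith)
    have h5 : 0 ≤ (κ3/L)*Real.exp (δ'*(y-L-B)) :=
      mul_nonneg (div_nonneg hκ3.le hL0.le) (Real.exp_pos _).le
    have hq := hAq (Real.exp (-(y/2)))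
    nlinarith [hq, hs, h3, h4, h5]
  -- global nonnegativity
  have hnn : ∀ y : ℝ, 0 ≤ Φ y := by
    intro y
    rcases le_or_gt y 0 with hy | hy
    · exact le_trans (le_of_lt (Real.exp_pos _)) (hpay y hy)
    rcases le_or_gt y L with hyL | hyL
    · rw [hΦy]
      have he : Real.exp (-(y/2)) ≤ (L - y + 1)/L := aux_exp_half_le hL (le_of_lt hy) hyL
      have h3 : ε * Real.exp (-(y/2)) ≤ (A/L)*(L+B-y) := by
        rw [div_mul_eq_mul_div, le_div_iff₀ hL0]
        calc ε * Real.exp (-(y/2)) * L ≤ ε * ((L-y+1)/L) * L := by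
              have := mul_le_mul_of_nonneg_left he hε; nlinarith
          _ = ε * (L-y+1) := by field_simp
          _ ≤ A*(L+B-y) := by nlinarith
      have h4 := hmid y hyL
      have h5 : (0:ℝ) ≤ (κ3/L)*Real.exp (δ'*(y-L-B)) :=
        mul_nonneg (div_nonneg hκ3.le hL0.le) (Real.exp_pos _).le
      have h6 : (0:ℝ) ≤ 2*Real.exp (-y) := by positivity
      linarith
    · -- L < y
      have hve : ε * Real.exp (-(y/2)) * L ≤ ε := by
        have h7 : Real.exp (-(y/2)) ≤ Real.exp (-(L/2)) := Real.exp_le_exp.mpr (by linarith)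
        have h8 := aux_self_le_exp_half hL
        calc ε * Real.exp (-(y/2)) * L = ε * (Real.exp (-(y/2)) * L) := by ring
          _ ≤ ε * (Real.exp (-(L/2)) * L) :=
              mul_le_mul_of_nonneg_left (mul_le_mul_of_nonneg_right h7 hL0.le) hε
          _ ≤ ε * 1 := mul_le_mul_of_nonneg_left (by linarith [h8]) hε
          _ = ε := mul_one ε
      have goalL : ε ≤ -A*(y-L-B) + κ2*(1 - Real.exp (δ*(y-L-B))) + κ3*Real.exp (δ'*(y-L-B)) := by
        rcases le_or_gt (y-L-B) 0 with ht | ht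
        · have g1 : 0 ≤ -A*(y-L-B) := by nlinarith
          have g2 : 0 ≤ κ2*(1 - Real.exp (δ*(y-L-B))) := by
            apply mul_nonneg hκ2.le
            have : Real.exp (δ*(y-L-B)) ≤ 1 := by
              rw [Real.exp_le_one_iff]
              exact mul_nonpos_of_nonneg_of_nonpos hδ.le (by linarith)
            linarith
          have g3 : ε ≤ κ3*Real.exp (δ'*(y-L-B)) := by
            have hB' : -B ≤ y-L-B := by linarith
            have e1 : Real.exp (δ'*(-B)) ≤ Real.exp (δ'*(y-L-B)) :=
              Real.exp_le_exp.mpr (by nlinarith)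
            have e2 : Real.exp (δ'*B) * Real.exp (δ'*(-B)) = 1 := by
              rw [← Real.exp_add]; rw [show δ'*B + δ'*(-B) = 0 by ring, Real.exp_zero]
            nlinarith [Real.exp_pos (δ'*(-B)), Real.exp_pos (δ'*B), Real.exp_pos (δ'*(y-L-B)), hκ3a, hκ3]
          linarith
        · have m1 : Real.exp (δ*(y-L-B)) ≤ Real.exp (δ'*(y-L-B)) :=
            Real.exp_le_exp.mpr (by nlinarith)
          have m2 : 1 + δ'*(y-L-B) ≤ Real.exp (δ'*(y-L-B)) := by
            have := Real.add_one_le_exp (δ'*(y-L-B)); linarith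
          have m3 : (1:ℝ) ≤ Real.exp (δ'*(y-L-B)) := by nlinarith
          have k1 : κ2*Real.exp (δ'*(y-L-B)) + (A/δ')*Real.exp (δ'*(y-L-B))
              + ε*Real.exp (δ'*(y-L-B)) ≤ κ3*Real.exp (δ'*(y-L-B)) := by
            nlinarith [Real.exp_pos (δ'*(y-L-B))]
          have k2 : (A/δ')*(1 + δ'*(y-L-B)) ≤ (A/δ')*Real.exp (δ'*(y-L-B)) :=
            mul_le_mul_of_nonneg_left m2 (div_nonneg hA0.le hδ'.le)
          have k3 : (A/δ')*(1 + δ'*(y-L-B)) = A/δ' + A*(y-L-B) := by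
            field_simp
          have k4 : κ2*Real.exp (δ*(y-L-B)) ≤ κ2*Real.exp (δ'*(y-L-B)) :=
            mul_le_mul_of_nonneg_left m1 hκ2.le
          have k5 : ε ≤ ε*Real.exp (δ'*(y-L-B)) := by nlinarith
          have hAδ' : (0:ℝ) ≤ A/δ' := by positivity
          nlinarith [k1, k2, k4, k5, k3]
      have hmul : 0 ≤ Φ y * L := by
        have hexpand : Φ y * L = 2*Real.exp (-y)*L - ε*Real.exp (-(y/2))*L + A*(L+B-y)
            + κ2*(1 - Real.exp (δ*(y-L-B))) + κ3*Real.exp (δ'*(y-L-B)) := by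
          rw [hΦy]; field_simp
        rw [hexpand]
        have h9 : (0:ℝ) ≤ 2*Real.exp (-y)*L := by positivity
        nlinarith [goalL, hve, h9]
      by_contra hneg
      push_neg at hneg
      nlinarith [hmul]
  -- key supermartingale inequality
  have hstep : ∀ x : ℝ, 0 ≤ x → x ≤ L →
      Integrable (fun t => Φ (x + t)) ν ∧ ∫ t, Φ (x + t) ∂ν ≤ Φ x := by
    intro x hx hxL
    have e1 : ∀ t:ℝ, Real.exp (-(x+t)) = Real.exp (-x) * Real.exp (-1*t) := fun t => by
      rw [← Real.exp_add]; congr 1; ring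
    have e2 : ∀ t:ℝ, Real.exp (-((x+t)/2)) = Real.exp (-(x/2)) * Real.exp (-(1/2)*t) := fun t => by
      rw [← Real.exp_add]; congr 1; ring
    have e3 : ∀ t:ℝ, Real.exp (δ*(x+t-L-B)) = Real.exp (δ*(x-L-B)) * Real.exp (δ*t) := fun t => by
      rw [← Real.exp_add]; congr 1; ring
    have e4 : ∀ t:ℝ, Real.exp (δ'*(x+t-L-B)) = Real.exp (δ'*(x-L-B)) * Real.exp (δ'*t) := fun t => by
      rw [← Real.exp_add]; congr 1; ring
    have hrw : (fun t => Φ (x+t)) = fun t =>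
        (2*Real.exp (-x)) * Real.exp (-1*t)
        + ((-(ε*Real.exp (-(x/2)))) * Real.exp (-(1/2)*t)
        + (((A/L)*(L+B-x) + κ2/L)
        + ((-(A/L)) * t
        + ((-(κ2/L * Real.exp (δ*(x-L-B)))) * Real.exp (δ*t)
        + (κ3/L * Real.exp (δ'*(x-L-B))) * Real.exp (δ'*t))))) := by
      funext t
      rw [hΦy, e1 t, e2 t, e3 t, e4 t]
      ring
    have I1 : Integrable (fun t => (2*Real.exp (-x)) * Real.exp (-1*t)) ν := h1.const_mul _
    have I2 : Integrable (fun t => (-(ε*Real.exp (-(x/2)))) * Real.exp (-(1/2)*t)) ν := hh.const_mul _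
    have I3 : Integrable (fun _ : ℝ => (A/L)*(L+B-x) + κ2/L) ν := integrable_const _
    have I4 : Integrable (fun t : ℝ => (-(A/L)) * t) ν := hid.const_mul _
    have I5 : Integrable (fun t => (-(κ2/L * Real.exp (δ*(x-L-B)))) * Real.exp (δ*t)) ν := hd.const_mul _
    have I6 : Integrable (fun t => (κ3/L * Real.exp (δ'*(x-L-B))) * Real.exp (δ'*t)) ν := hd'.const_mul _
    have J5 : Integrable (fun t => (-(κ2/L * Real.exp (δ*(x-L-B)))) * Real.exp (δ*t)
        + (κ3/L * Real.exp (δ'*(x-L-B))) * Real.exp (δ'*t)) ν := I5.add I6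
    have J4 : Integrable (fun t => (-(A/L)) * t
        + ((-(κ2/L * Real.exp (δ*(x-L-B)))) * Real.exp (δ*t)
        + (κ3/L * Real.exp (δ'*(x-L-B))) * Real.exp (δ'*t))) ν := I4.add J5
    have J3 : Integrable (fun t => ((A/L)*(L+B-x) + κ2/L)
        + ((-(A/L)) * t
        + ((-(κ2/L * Real.exp (δ*(x-L-B)))) * Real.exp (δ*t)
        + (κ3/L * Real.exp (δ'*(x-L-B))) * Real.exp (δ'*t)))) ν := I3.add J4
    have J2 : Integrable (fun t => (-(ε*Real.exp (-(x/2)))) * Real.exp (-(1/2)*t)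
        + (((A/L)*(L+B-x) + κ2/L)
        + ((-(A/L)) * t
        + ((-(κ2/L * Real.exp (δ*(x-L-B)))) * Real.exp (δ*t)
        + (κ3/L * Real.exp (δ'*(x-L-B))) * Real.exp (δ'*t))))) ν := I2.add J3
    constructor
    · rw [hrw]; exact I1.add J2
    · have hval : ∫ t, Φ (x+t) ∂ν = 2*Real.exp (-x)*φ1 - ε*Real.exp (-(x/2))*φh
          + ((A/L)*(L+B-x) + κ2/L) - (κ2/L*Real.exp (δ*(x-L-B)))*ψ
          + (κ3/L*Real.exp (δ'*(x-L-B)))*ψ' := by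
        rw [hrw, integral_add I1 J2,
            integral_add I2 J3,
            integral_add I3 J4,
            integral_add I4 J5,
            integral_add I5 I6,
            integral_const_mul, integral_const_mul, integral_const_mul, integral_const_mul,
            integral_const_mul, integral_const, hmean]
        simp only [measure_univ, probReal_univ, ENNReal.toReal_one, one_smul, smul_eq_mul, one_mul, mul_zero]
        rw [← hφ1def, ← hφhdef, ← hψdef, ← hψ'def]
        ring
      rw [hval, hΦy]
      have m1 : Real.exp (-x) ≤ Real.exp (-(x/2)) := Real.exp_le_exp.mpr (by linarith)
      have pA : 2*Real.exp (-x)*(φ1 - 1) ≤ ε*Real.exp (-(x/2))*(φh - 1) := by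
        have h' : 2*Real.exp (-x)*(φ1-1) ≤ 2*Real.exp (-(x/2))*(φ1-1) := by
          nlinarith [m1, hφ1]
        have h'' : 2*Real.exp (-(x/2))*(φ1-1) = ε*Real.exp (-(x/2))*(φh-1) := by
          linear_combination (-Real.exp (-(x/2))) * hεe
        linarith
      have e5 : Real.exp (δ'*(x-L-B)) = Real.exp (δ*(x-L-B)) * Real.exp ((δ'-δ)*(x-L-B)) := by
        rw [← Real.exp_add]; congr 1; ring
      have m2 : Real.exp ((δ'-δ)*(x-L-B)) ≤ Real.exp (-(δ'-δ)*B) :=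
        Real.exp_le_exp.mpr (by nlinarith)
      have pB : (κ3/L)*Real.exp (δ'*(x-L-B))*(ψ' - 1) ≤ (κ2/L)*Real.exp (δ*(x-L-B))*(ψ - 1) := by
        have hb1 : Real.exp ((δ'-δ)*(x-L-B)) * (ψ' - 1) ≤ Real.exp (-(δ'-δ)*B) * (ψ' - 1) :=
          mul_le_mul_of_nonneg_right m2 (by linarith)
        have hb2 : Real.exp (-(δ'-δ)*B) * (ψ' - 1) ≤ (ψ-1)/2 := by
          rw [mul_comm]; exact hBkey
        rw [e5]
        have hpos3 : (0:ℝ) ≤ (κ3/L)*Real.exp (δ*(x-L-B)) :=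
          mul_nonneg (div_nonneg hκ3.le hL0.le) (Real.exp_pos _).le
        calc (κ3/L)*(Real.exp (δ*(x-L-B)) * Real.exp ((δ'-δ)*(x-L-B)))*(ψ' - 1)
            = ((κ3/L)*Real.exp (δ*(x-L-B))) * (Real.exp ((δ'-δ)*(x-L-B))*(ψ' - 1)) := by ring
          _ ≤ ((κ3/L)*Real.exp (δ*(x-L-B))) * ((ψ-1)/2) :=
              mul_le_mul_of_nonneg_left (le_trans hb1 hb2) hpos3
          _ = (κ2/L)*Real.exp (δ*(x-L-B))*(ψ - 1) := by rw [hκ2d]; ring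
      nlinarith [pA, pB]
  -- value bound
  have hval : ∀ a : ℝ, 0 ≤ a → a ≤ L → Φ a ≤ c * (L - a + 1) / L := by
    intro a ha haL
    rw [hΦy]
    have e1 : Real.exp (-a) ≤ (L-a+1)/L :=
      le_trans (Real.exp_le_exp.mpr (by linarith)) (aux_exp_half_le hL ha haL)
    have e2 : (0:ℝ) ≤ ε*Real.exp (-(a/2)) := mul_nonneg hε (Real.exp_pos _).le
    have hfrac : (0:ℝ) ≤ (L-a+1)/L := div_nonneg (by linarith) hL0.le
    have hfrac1 : (1:ℝ)/L ≤ (L-a+1)/L := by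
      exact (div_le_div_iff_of_pos_right hL0).mpr (by linarith)
    have e3 : (A/L)*(L+B-a) ≤ (A*B)*((L-a+1)/L) := by
      rw [div_mul_eq_mul_div, ← mul_div_assoc]
      apply (div_le_div_iff_of_pos_right hL0).mpr
      nlinarith [mul_nonneg (mul_nonneg hA0.le (show (0:ℝ) ≤ B-1 by linarith))
        (show (0:ℝ) ≤ L-a by linarith)]
    have e4 : (κ2/L)*(1 - Real.exp (δ*(a-L-B))) ≤ κ2*((L-a+1)/L) := by
      have := Real.exp_pos (δ*(a-L-B))
      calc (κ2/L)*(1 - Real.exp (δ*(a-L-B))) ≤ (κ2/L)*1 := by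
            apply mul_le_mul_of_nonneg_left _ (div_nonneg hκ2.le hL0.le); linarith
        _ = κ2*(1/L) := by ring
        _ ≤ κ2*((L-a+1)/L) := mul_le_mul_of_nonneg_left hfrac1 hκ2.le
    have e5 : (κ3/L)*Real.exp (δ'*(a-L-B)) ≤ κ3*((L-a+1)/L) := by
      have hle1 : Real.exp (δ'*(a-L-B)) ≤ 1 := by
        rw [Real.exp_le_one_iff]
        exact mul_nonpos_of_nonneg_of_nonpos hδ'.le (by linarith)
      calc (κ3/L)*Real.exp (δ'*(a-L-B)) ≤ (κ3/L)*1 := by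
            apply mul_le_mul_of_nonneg_left hle1 (div_nonneg hκ3.le hL0.le)
        _ = κ3*(1/L) := by ring
        _ ≤ κ3*((L-a+1)/L) := mul_le_mul_of_nonneg_left hfrac1 hκ3.le
    have hgoal : c * (L - a + 1) / L = c*((L-a+1)/L) := by ring
    rw [hgoal, hcdef]
    nlinarith [e1, e2, e3, e4, e5, hfrac]
  exact ⟨Φ, by rw [hΦ]; fun_prop, hnn, fun y hy => hpay y (le_of_lt hy), hstep, hval⟩

private lemma enat_iInf_le {P : ℕ → Prop} {n : ℕ} (h : P n) :
    (⨅ (k : ℕ) (_ : P k), (k : ℕ∞)) ≤ n :=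
  iInf_le_of_le n (by simp [h])

private lemma enat_lt_iInf {P : ℕ → Prop} {n : ℕ} (h : ∀ k ≤ n, ¬ P k) :
    (n : ℕ∞) < ⨅ (k : ℕ) (_ : P k), (k : ℕ∞) := by
  have hle : ((n+1 : ℕ) : ℕ∞) ≤ ⨅ (k : ℕ) (_ : P k), (k : ℕ∞) := by
    refine le_iInf fun k => le_iInf fun hk => ?_
    have : n + 1 ≤ k := by by_contra hc; exact h k (by omega) hk
    exact_mod_cast this
  calc (n : ℕ∞) < ((n+1:ℕ) : ℕ∞) := by exact_mod_cast Nat.lt_succ_self n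
    _ ≤ _ := hle

private lemma enat_iInf_eq {P : ℕ → Prop} {m : ℕ} (hm : P m) (hmin : ∀ k < m, ¬ P k) :
    (⨅ (k : ℕ) (_ : P k), (k : ℕ∞)) = m := by
  refine le_antisymm (enat_iInf_le hm) (le_iInf fun k => le_iInf fun hk => ?_)
  have : m ≤ k := by by_contra hc; exact hmin k (by omega) hk
  exact_mod_cast this

private lemma enat_iInf_top {P : ℕ → Prop} (h : ∀ k, ¬ P k) :
    (⨅ (k : ℕ) (_ : P k), (k : ℕ∞)) = ⊤ := by
  simp [h]

private lemma walk_measurable (X : ℕ → Ω → ℝ) (hmeas : ∀ i, Measurable (X i)) (a : ℝ) (n : ℕ) :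
    Measurable (walk X a n) := by
  unfold walk
  exact measurable_const.add (Finset.measurable_sum _ fun i _ => hmeas i)

private lemma walk_zero (X : ℕ → Ω → ℝ) (a : ℝ) (ω : Ω) : walk X a 0 ω = a := by
  simp [walk]

private lemma walk_succ (X : ℕ → Ω → ℝ) (a : ℝ) (n : ℕ) (ω : Ω) :
    walk X a (n+1) ω = walk X a n ω + X n ω := by
  simp [walk, Finset.sum_range_succ]; ring


set_option maxHeartbeats 2000000 in
/-- Lemma `lem:estcrit`, (pal). For a centered random walk with
positive variance and exponential moments on `(-(1+η), η)`, there is `c > 1` such that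
for all `L ≥ 1` and `0 ≤ a ≤ L`:
`E_a[e^{-S_{τ_0^-}} 1_{τ_0^- < τ_L^+}] ≤ c (L - a + 1)/L`. -/
theorem centered_exit_below_exponential_bound
    (μ : Measure Ω) [IsProbabilityMeasure μ]
    (X : ℕ → Ω → ℝ) (hmeas : ∀ i, Measurable (X i))
    (hindep : iIndepFun X μ)
    (hident : ∀ i, IdentDistrib (X i) (X 0) μ μ)
    (hcent : ∫ ω, X 0 ω ∂μ = 0)
    (hvar : 0 < variance (X 0) μ)
    (η : ℝ) (hη : 0 < η)
    (hexp : ∀ u : ℝ, -(1 + η) < u → u < η →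
      Integrable (fun ω => Real.exp (u * X 0 ω)) μ)
    :
    ∃ c : ℝ, 1 < c ∧ ∀ L : ℝ, 1 ≤ L → ∀ a : ℝ, 0 ≤ a → a ≤ L →
      ∫⁻ ω, (if hitBelow X a 0 ω < hitAbove X a L ω
          then ENNReal.ofReal (Real.exp (-stopBelow X a 0 ω)) else 0) ∂μ
        ≤ ENNReal.ofReal (c * (L - a + 1) / L) := by
  classical
  have hX0 : Measurable (X 0) := hmeas 0
  haveI : IsProbabilityMeasure (μ.map (X 0)) := Measure.isProbabilityMeasure_map hX0.aemeasurable
  have hXint : ∀ u : ℝ, -(1 + η) < u → u < η →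
      Integrable (fun t => Real.exp (u * t)) (μ.map (X 0)) := by
    intro u h1 h2
    exact (integrable_map_measure (Measurable.aestronglyMeasurable (by fun_prop)) hX0.aemeasurable).mpr (hexp u h1 h2)
  have hmean : ∫ t, t ∂(μ.map (X 0)) = 0 := by
    have h := integral_map (μ := μ) (φ := X 0) (f := fun t : ℝ => t) hX0.aemeasurable aestronglyMeasurable_id
    rw [h]; exact hcent
  have hpos : 0 < (μ.map (X 0)) {t : ℝ | t ≠ 0} := by
    have hms : MeasurableSet {t : ℝ | t ≠ 0} := (measurableSet_singleton (0:ℝ)).compl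
    rw [Measure.map_apply hX0 hms, pos_iff_ne_zero]
    intro h0
    have hae : X 0 =ᵐ[μ] fun _ => 0 := by
      rw [Filter.EventuallyEq, ae_iff]
      simpa using h0
    have hvar0 : variance (X 0) μ = 0 := by
      have hev : evariance (X 0) μ = 0 := by
        rw [evariance_eq_zero_iff hX0.aemeasurable]
        have h1 : μ[X 0] = 0 := hcent
        rw [h1]
        exact hae
      rw [variance, hev]
      simp
    linarith
  obtain ⟨c, hc, hfam⟩ := phi_family (μ.map (X 0)) η hη hXint hmean hpos
  refine ⟨c, hc, ?_⟩
  intro L hL a ha haL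
  obtain ⟨Φ, hΦm, hΦ0, hΦpay, hΦstep, hΦval⟩ := hfam L hL
  have hL0 : (0:ℝ) < L := by linarith
  have hW : ∀ n, Measurable (walk X a n) := walk_measurable X hmeas a
  set aP : ℕ → Ω → Prop := fun m ω =>
    (∀ k < m, 0 ≤ walk X a k ω ∧ walk X a k ω ≤ L) ∧ walk X a m ω < 0 with haP
  set eP : ℕ → Ω → Prop := fun n ω => ∀ k ≤ n, 0 ≤ walk X a k ω ∧ walk X a k ω ≤ L with heP
  have hone : ∀ k, MeasurableSet {ω | 0 ≤ walk X a k ω ∧ walk X a k ω ≤ L} := fun k =>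
    (measurableSet_le measurable_const (hW k)).inter (measurableSet_le (hW k) measurable_const)
  have haPm : ∀ m, MeasurableSet {ω | aP m ω} := by
    intro m
    have hEq : {ω | aP m ω} =
        (⋂ k, ⋂ (_ : k < m), {ω | 0 ≤ walk X a k ω ∧ walk X a k ω ≤ L})
        ∩ {ω | walk X a m ω < 0} := by
      ext ω; simp [haP, Set.mem_iInter]
    rw [hEq]
    exact (MeasurableSet.iInter fun k => MeasurableSet.iInter fun _ => hone k).inter
      (measurableSet_lt (hW m) measurable_const)
  have hePm : ∀ n, MeasurableSet {ω | eP n ω} := by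
    intro n
    have hEq : {ω | eP n ω} =
        ⋂ k, ⋂ (_ : k ≤ n), {ω | 0 ≤ walk X a k ω ∧ walk X a k ω ≤ L} := by
      ext ω; simp [heP, Set.mem_iInter]
    rw [hEq]
    exact MeasurableSet.iInter fun k => MeasurableSet.iInter fun _ => hone k
  set f : ℕ → Ω → ℝ≥0∞ := fun m ω =>
    if aP m ω then ENNReal.ofReal (Real.exp (-(walk X a m ω))) else 0 with hf
  set g : ℕ → Ω → ℝ≥0∞ := fun n ω =>
    if eP n ω then ENNReal.ofReal (Φ (walk X a n ω)) else 0 with hg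
  have hfm : ∀ m, Measurable (f m) := fun m =>
    Measurable.ite (haPm m)
      (ENNReal.measurable_ofReal.comp (Real.measurable_exp.comp (hW m).neg))
      measurable_const
  have hgm : ∀ n, Measurable (g n) := fun n =>
    Measurable.ite (hePm n)
      (ENNReal.measurable_ofReal.comp (hΦm.comp (hW n)))
      measurable_const
  -- pointwise payoff comparison
  have step1 : ∀ n ω, f (n+1) ω + g (n+1) ω
      ≤ (if eP n ω then ENNReal.ofReal (Φ (walk X a (n+1) ω)) else 0) := by
    intro n ω
    by_cases hA : aP (n+1) ω
    · have hE1 : ¬ eP (n+1) ω := by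
        intro hE; exact absurd hA.2 (not_lt.mpr (hE (n+1) le_rfl).1)
      have hE0 : eP n ω := fun k hk => hA.1 k (by omega)
      simp only [hf, hg, if_pos hA, if_neg hE1, if_pos hE0, add_zero]
      exact ENNReal.ofReal_le_ofReal (hΦpay _ hA.2)
    · by_cases hE : eP (n+1) ω
      · have hE0 : eP n ω := fun k hk => hE k (by omega)
        simp only [hf, hg, if_neg hA, if_pos hE, if_pos hE0, zero_add]
        exact le_rfl
      · simp only [hf, hg, if_neg hA, if_neg hE, add_zero]
        exact zero_le
  -- the one-step supermartingale inequality via independence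
  have step2 : ∀ n : ℕ,
      (∫⁻ ω, (if eP n ω then ENNReal.ofReal (Φ (walk X a (n+1) ω)) else 0) ∂μ)
      ≤ ∫⁻ ω, g n ω ∂μ := by
    intro n
    set V : Ω → (ℕ → ℝ) := fun ω i => if i < n then X i ω else 0 with hV
    have hVmeas : Measurable V := by
      apply measurable_pi_lambda
      intro i
      by_cases h : i < n
      · simpa [hV, h] using hmeas i
      · simp only [hV, if_neg h]
        exact measurable_const
    set pw : (ℕ → ℝ) → ℕ → ℝ := fun v k => a + ∑ i ∈ Finset.range k, v i with hpw
    have hpwm : ∀ k, Measurable fun v => pw v k := fun k =>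
      measurable_const.add (Finset.measurable_sum _ fun i _ => measurable_pi_apply i)
    set D : Set (ℕ → ℝ) := {v | ∀ k ≤ n, 0 ≤ pw v k ∧ pw v k ≤ L} with hD
    have hDm : MeasurableSet D := by
      have hEq : D = ⋂ k, ⋂ (_ : k ≤ n), {v | 0 ≤ pw v k ∧ pw v k ≤ L} := by
        ext v; simp [hD, Set.mem_iInter]
      rw [hEq]
      exact MeasurableSet.iInter fun k => MeasurableSet.iInter fun _ =>
        (measurableSet_le measurable_const (hpwm k)).inter
          (measurableSet_le (hpwm k) measurable_const)
    have hWV : ∀ ω, ∀ k, k ≤ n → walk X a k ω = pw (V ω) k := by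
      intro ω k hk
      simp only [hpw, hV, walk]
      congr 1
      refine Finset.sum_congr rfl fun i hi => ?_
      rw [if_pos (lt_of_lt_of_le (Finset.mem_range.mp hi) hk)]
    have hED : ∀ ω, eP n ω ↔ V ω ∈ D := by
      intro ω
      constructor
      · intro h k hk; rw [← hWV ω k hk]; exact h k hk
      · intro h k hk; rw [hWV ω k hk]; exact h k hk
    have hIndep : IndepFun V (X n) μ := by
      have h2 := ProbabilityTheory.iIndepFun.indepFun_finset (Finset.range n) {n}
        (by simp [Finset.disjoint_left]; omega) hindep hmeas
      let φmap : ((i : (Finset.range n : Finset ℕ)) → ℝ) → (ℕ → ℝ) := fun v i =>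
        if h : i < n then v ⟨i, Finset.mem_range.mpr h⟩ else 0
      have hφ : Measurable φmap := by
        apply measurable_pi_lambda
        intro i
        by_cases h : i < n
        · simp only [φmap, dif_pos h]
          exact measurable_pi_apply _
        · simp only [φmap, dif_neg h]
          exact measurable_const
      let ψmap : ((i : ({n} : Finset ℕ)) → ℝ) → ℝ := fun v => v ⟨n, Finset.mem_singleton_self n⟩
      have hψ : Measurable ψmap := measurable_pi_apply _
      have h3 := h2.comp hφ hψ
      have e1 : φmap ∘ (fun ω (i : (Finset.range n : Finset ℕ)) => X i ω) = V := by
        funext ω i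
        by_cases h : i < n
        · simp [φmap, hV, h, Function.comp]
        · simp [φmap, hV, h, Function.comp]
      have e2 : ψmap ∘ (fun ω (i : (({n} : Finset ℕ) : Finset ℕ)) => X i ω) = X n := rfl
      rwa [e1, e2] at h3
    haveI : IsProbabilityMeasure (μ.map V) := Measure.isProbabilityMeasure_map hVmeas.aemeasurable
    haveI : IsProbabilityMeasure (μ.map (X n)) := Measure.isProbabilityMeasure_map (hmeas n).aemeasurable
    set H : (ℕ → ℝ) × ℝ → ℝ≥0∞ := fun p =>
      if p.1 ∈ D then ENNReal.ofReal (Φ (pw p.1 n + p.2)) else 0 with hH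
    have hHm : Measurable H := by
      refine Measurable.ite (measurable_fst hDm) ?_ measurable_const
      exact ENNReal.measurable_ofReal.comp
        (hΦm.comp (((hpwm n).comp measurable_fst).add measurable_snd))
    have hLmap : μ.map (X n) = μ.map (X 0) := (hident n).map_eq
    have hpt1 : ∀ ω, (if eP n ω then ENNReal.ofReal (Φ (walk X a (n+1) ω)) else 0)
        = H (V ω, X n ω) := by
      intro ω
      have hw : walk X a (n+1) ω = pw (V ω) n + X n ω := by
        rw [walk_succ, hWV ω n le_rfl]
      by_cases h : eP n ω
      · rw [if_pos h]
        simp only [hH]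
        rw [if_pos ((hED ω).mp h), hw]
      · rw [if_neg h]
        simp only [hH]
        rw [if_neg (fun hc => h ((hED ω).mpr hc))]
    have hGm : Measurable (fun v => if v ∈ D then ENNReal.ofReal (Φ (pw v n)) else 0) :=
      Measurable.ite hDm (ENNReal.measurable_ofReal.comp (hΦm.comp (hpwm n))) measurable_const
    have hpt2 : ∀ ω, g n ω = (fun v => if v ∈ D then ENNReal.ofReal (Φ (pw v n)) else 0) (V ω) := by
      intro ω
      by_cases h : eP n ω
      · simp only [hg, if_pos h, if_pos ((hED ω).mp h), hWV ω n le_rfl]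
      · simp only [hg, if_neg h, if_neg (fun hc => h ((hED ω).mpr hc))]
    calc (∫⁻ ω, (if eP n ω then ENNReal.ofReal (Φ (walk X a (n+1) ω)) else 0) ∂μ)
        = ∫⁻ ω, H (V ω, X n ω) ∂μ := lintegral_congr hpt1
      _ = ∫⁻ p, H p ∂(μ.map (fun ω => (V ω, X n ω))) :=
          (lintegral_map hHm (hVmeas.prodMk (hmeas n))).symm
      _ = ∫⁻ p, H p ∂((μ.map V).prod (μ.map (X n))) := by
          rw [(indepFun_iff_map_prod_eq_prod_map_map hVmeas.aemeasurable
            (hmeas n).aemeasurable).mp hIndep]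
      _ = ∫⁻ v, ∫⁻ t, H (v, t) ∂(μ.map (X n)) ∂(μ.map V) := lintegral_prod _ hHm.aemeasurable
      _ ≤ ∫⁻ v, (if v ∈ D then ENNReal.ofReal (Φ (pw v n)) else 0) ∂(μ.map V) := by
          apply lintegral_mono
          intro v
          dsimp only
          by_cases hv : v ∈ D
          · rw [if_pos hv]
            have hx : 0 ≤ pw v n ∧ pw v n ≤ L := hv n le_rfl
            obtain ⟨hInt, hle⟩ := hΦstep (pw v n) hx.1 hx.2
            have hHv : ∀ t, H (v, t) = ENNReal.ofReal (Φ (pw v n + t)) := fun t => by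
              simp only [hH]; rw [if_pos hv]
            calc ∫⁻ t, H (v, t) ∂(μ.map (X n))
                = ∫⁻ t, ENNReal.ofReal (Φ (pw v n + t)) ∂(μ.map (X 0)) := by
                  rw [hLmap]; exact lintegral_congr hHv
              _ = ENNReal.ofReal (∫ t, Φ (pw v n + t) ∂(μ.map (X 0))) :=
                  (ofReal_integral_eq_lintegral_ofReal hInt
                    (Filter.Eventually.of_forall fun t => hΦ0 _)).symm
              _ ≤ ENNReal.ofReal (Φ (pw v n)) := ENNReal.ofReal_le_ofReal hle
          · rw [if_neg hv]
            have hHv : ∀ t, H (v, t) = 0 := fun t => by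
              simp only [hH]; rw [if_neg hv]
            simp only [hHv, lintegral_zero, le_refl]
      _ = ∫⁻ ω, (fun v => if v ∈ D then ENNReal.ofReal (Φ (pw v n)) else 0) (V ω) ∂μ :=
          lintegral_map hGm hVmeas
      _ = ∫⁻ ω, g n ω ∂μ := (lintegral_congr hpt2).symm
  -- the decreasing chain
  set K : ℕ → ℝ≥0∞ := fun n =>
    (∑ m ∈ Finset.range (n+1), ∫⁻ ω, f m ω ∂μ) + ∫⁻ ω, g n ω ∂μ with hK
  have hK0 : K 0 ≤ ENNReal.ofReal (Φ a) := by
    have hf0 : ∀ ω, f 0 ω = 0 := by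
      intro ω
      simp only [hf]
      rw [if_neg]
      rintro ⟨-, h2⟩
      rw [walk_zero] at h2
      linarith
    have hg0 : ∀ ω, g 0 ω ≤ ENNReal.ofReal (Φ a) := by
      intro ω
      simp only [hg]
      split
      · rw [walk_zero]
      · exact zero_le
    calc K 0 = (∫⁻ ω, f 0 ω ∂μ) + ∫⁻ ω, g 0 ω ∂μ := by
          simp only [hK]; norm_num
      _ = ∫⁻ ω, g 0 ω ∂μ := by
          rw [lintegral_congr hf0, lintegral_zero, zero_add]
      _ ≤ ∫⁻ _, ENNReal.ofReal (Φ a) ∂μ := lintegral_mono hg0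
      _ = ENNReal.ofReal (Φ a) := by rw [lintegral_const, measure_univ, mul_one]
  have hKstep : ∀ n, K (n+1) ≤ K n := by
    intro n
    simp only [hK]
    rw [Finset.sum_range_succ (fun m => ∫⁻ ω, f m ω ∂μ) (n+1), add_assoc]
    apply add_le_add le_rfl
    calc (∫⁻ ω, f (n+1) ω ∂μ) + ∫⁻ ω, g (n+1) ω ∂μ
        = ∫⁻ ω, f (n+1) ω + g (n+1) ω ∂μ := (lintegral_add_left (hfm (n+1)) _).symm
      _ ≤ ∫⁻ ω, (if eP n ω then ENNReal.ofReal (Φ (walk X a (n+1) ω)) else 0) ∂μ :=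
          lintegral_mono (fun ω => step1 n ω)
      _ ≤ ∫⁻ ω, g n ω ∂μ := step2 n
  have hKbound : ∀ n, K n ≤ ENNReal.ofReal (Φ a) := by
    intro n
    induction n with
    | zero => exact hK0
    | succ n ih => exact le_trans (hKstep n) ih
  have hSbound : ∀ n, (∑ m ∈ Finset.range n, ∫⁻ ω, f m ω ∂μ) ≤ ENNReal.ofReal (Φ a) := by
    intro n
    cases n with
    | zero => simp
    | succ n =>
        have h1 := hKbound n
        simp only [hK] at h1
        exact le_trans le_self_add h1
  -- identification of the target integrand
  have hpt : ∀ ω, (if hitBelow X a 0 ω < hitAbove X a L ω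
      then ENNReal.ofReal (Real.exp (-stopBelow X a 0 ω)) else 0) = ∑' m, f m ω := by
    intro ω
    by_cases hex : ∃ m, aP m ω
    · obtain ⟨m, hm⟩ := hex
      have huniq : ∀ m', m' ≠ m → ¬ aP m' ω := by
        intro m' hne hm'
        rcases lt_or_gt_of_ne hne with hlt | hgt
        · exact absurd hm'.2 (not_lt.mpr (hm.1 m' hlt).1)
        · exact absurd hm.2 (not_lt.mpr (hm'.1 m hgt).1)
      have hB : hitBelow X a 0 ω = m :=
        enat_iInf_eq hm.2 (fun k hk => not_lt.mpr (hm.1 k hk).1)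
      have hAb : (m : ℕ∞) < hitAbove X a L ω := by
        apply enat_lt_iInf
        intro k hk
        rcases Nat.lt_or_ge k m with h | h
        · exact not_lt.mpr (hm.1 k h).2
        · have hkm : k = m := le_antisymm hk h
          subst hkm
          exact not_lt.mpr (by linarith [hm.2] : walk X a k ω ≤ L)
      have hcond : hitBelow X a 0 ω < hitAbove X a L ω := by rw [hB]; exact hAb
      rw [if_pos hcond]
      have hstopv : stopBelow X a 0 ω = walk X a m ω := by
        unfold stopBelow
        rw [hB, ENat.toNat_coe]
      rw [hstopv,
        tsum_eq_single m (fun m' hne => by simp only [hf]; rw [if_neg (huniq m' hne)])]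
      simp only [hf]
      rw [if_pos hm]
    · push_neg at hex
      have h0 : ∀ m, f m ω = 0 := fun m => by simp only [hf]; rw [if_neg (hex m)]
      have hcondfalse : ¬ (hitBelow X a 0 ω < hitAbove X a L ω) := by
        intro hcond
        have hne : hitBelow X a 0 ω ≠ ⊤ := ne_top_of_lt hcond
        have hexP : ∃ k, walk X a k ω < 0 := by
          by_contra h'
          push_neg at h'
          exact hne (enat_iInf_top (fun k => not_lt.mpr (h' k)))
        have hmP : walk X a (Nat.find hexP) ω < 0 := Nat.find_spec hexP
        have hmin : ∀ k < Nat.find hexP, ¬ walk X a k ω < 0 := fun k hk => Nat.find_min hexP hk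
        have hB : hitBelow X a 0 ω = Nat.find hexP := enat_iInf_eq hmP hmin
        have hAb : ((Nat.find hexP : ℕ) : ℕ∞) < hitAbove X a L ω := by rw [← hB]; exact hcond
        have hup : ∀ k, k ≤ Nat.find hexP → ¬ L < walk X a k ω := by
          intro k hk hgt
          have h5 : hitAbove X a L ω ≤ k := enat_iInf_le hgt
          have h6 : (k : ℕ∞) ≤ (Nat.find hexP : ℕ∞) := by exact_mod_cast hk
          exact absurd (lt_of_le_of_lt (le_trans h5 h6) hAb) (lt_irrefl _)
        exact hex (Nat.find hexP)
          ⟨fun k hk => ⟨not_lt.mp (hmin k hk), not_lt.mp (hup k (le_of_lt hk))⟩, hmP⟩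
      rw [if_neg hcondfalse]
      exact ((tsum_congr h0).trans tsum_zero).symm
  calc ∫⁻ ω, (if hitBelow X a 0 ω < hitAbove X a L ω
          then ENNReal.ofReal (Real.exp (-stopBelow X a 0 ω)) else 0) ∂μ
      = ∫⁻ ω, ∑' m, f m ω ∂μ := lintegral_congr hpt
    _ = ∑' m, ∫⁻ ω, f m ω ∂μ := lintegral_tsum (fun m => (hfm m).aemeasurable)
    _ ≤ ENNReal.ofReal (Φ a) := by
        rw [ENNReal.tsum_eq_iSup_nat]
        exact iSup_le hSbound
    _ ≤ ENNReal.ofReal (c * (L - a + 1) / L) := ENNReal.ofReal_le_ofReal (hΦval a ha haL)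
end
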